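/- arXiv:2101.08321 — 7 statements merged into one kernel-verified Lean document; each statement's English description precedes it below -/
import Mathlib

section
/- Let m ≥ 2 and n ≥ 1 be integers and let ν ↦ A_ν be a linear Hermitian family of n×n matrices. If all eigenvalues of A_ν are nonzero (equivalently, A_ν is invertible) for every ν ∈ ℝ^m with |ν| = 1, then n is even. -/
/-- Let `m ≥ 2` and `n ≥ 1` and let `ν ↦ A ν` be a linear Hermitian family
of `n × n` complex matrices.  If `A ν` is invertible (equivalently, all of its eigenvalues are
nonzero) for every unit vector `ν ∈ ℝᵐ`, then `n` is even. -/
theorem statement_1 (m n : ℕ) (hm : 2 ≤ m) (hn : 1 ≤ n)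
    (A : EuclideanSpace ℝ (Fin m) →ₗ[ℝ] Matrix (Fin n) (Fin n) ℂ)
    (hHerm : ∀ ν, (A ν).IsHermitian)
    (hinv : ∀ ν : EuclideanSpace ℝ (Fin m), ‖ν‖ = 1 → IsUnit (A ν)) :
    Even n := by
  by_contra hodd
  rw [Nat.not_even_iff_odd] at hodd
  have h01 : (⟨0, by omega⟩ : Fin m) ≠ ⟨1, by omega⟩ := by simp [Fin.ext_iff]
  set e0 : EuclideanSpace ℝ (Fin m) := EuclideanSpace.single ⟨0, by omega⟩ 1 with he0
  set e1 : EuclideanSpace ℝ (Fin m) := EuclideanSpace.single ⟨1, by omega⟩ 1 with he1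
  -- the curve of unit vectors
  set ν : ℝ → EuclideanSpace ℝ (Fin m) := fun t => Real.cos t • e0 + Real.sin t • e1 with hν
  have hnorm : ∀ t : ℝ, ‖ν t‖ = 1 := by
    intro t
    have hinner : (inner ℝ e0 e1 : ℝ) = 0 := by
      simp [he0, he1, EuclideanSpace.inner_single_left, EuclideanSpace.single_apply, h01]
    have h2 : ‖ν t‖ ^ 2 = 1 ^ 2 := by
      rw [hν]
      simp only [norm_add_sq_real, inner_smul_left, inner_smul_right, hinner, norm_smul,
        EuclideanSpace.norm_single, he0, he1]
      simp [mul_pow, sq_abs, Real.cos_sq_add_sin_sq, EuclideanSpace.inner_single_left, EuclideanSpace.single_apply, h01]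
    exact (pow_left_inj₀ (norm_nonneg _) zero_le_one two_ne_zero).mp h2
  -- determinants are real
  have hdet_im : ∀ t : ℝ, ((A (ν t)).det).im = 0 := by
    intro t
    have h := congrArg Matrix.det (hHerm (ν t))
    rw [Matrix.det_conjTranspose] at h
    have := Complex.conj_eq_iff_im.mp h
    exact this
  have hdet_ne : ∀ t : ℝ, ((A (ν t)).det).re ≠ 0 := by
    intro t hre
    have hdet0 : (A (ν t)).det = 0 := Complex.ext hre (hdet_im t)
    have := (hinv (ν t) (hnorm t)).map (Matrix.detMonoidHom)
    rw [Matrix.coe_detMonoidHom, hdet0] at this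
    exact (not_isUnit_zero this : False)
  -- continuity of t ↦ re (det (A (ν t)))
  have hAν : ∀ t : ℝ, A (ν t) = Real.cos t • A e0 + Real.sin t • A e1 := by
    intro t; rw [hν]; simp [map_add, map_smul]
  set f : ℝ → ℝ := fun t => ((A (ν t)).det).re with hf
  have hcont : Continuous f := by
    have : Continuous fun t : ℝ => A (ν t) := by
      simp only [hAν]
      exact ((Real.continuous_cos.smul continuous_const).add
        (Real.continuous_sin.smul continuous_const))
    exact Complex.continuous_re.comp (this.matrix_det)
  -- sign flip : f π = - f 0
  have hflip : f Real.pi = - f 0 := by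
    have h0 : ν 0 = e0 := by simp [hν]
    have hπ : ν Real.pi = -e0 := by simp [hν]
    have : A (ν Real.pi) = - A (ν 0) := by rw [h0, hπ, map_neg]
    rw [hf]
    simp only [this, Matrix.det_neg, Fintype.card_fin, hodd.neg_one_pow]
    simp
  -- intermediate value theorem
  have hπpos : (0 : ℝ) ≤ Real.pi := Real.pi_nonneg
  rcases lt_or_gt_of_ne (hdet_ne 0) with hneg | hpos
  · have h0mem : (0 : ℝ) ∈ Set.Icc (f 0) (f Real.pi) := by
      constructor
      · exact le_of_lt hneg
      · rw [hflip]; linarith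
    obtain ⟨c, _, hc⟩ := intermediate_value_Icc hπpos hcont.continuousOn h0mem
    exact hdet_ne c hc
  · have h0mem : (0 : ℝ) ∈ Set.Icc (f Real.pi) (f 0) := by
      constructor
      · rw [hflip]; linarith
      · exact le_of_lt hpos
    obtain ⟨c, _, hc⟩ := intermediate_value_Icc' hπpos hcont.continuousOn h0mem
    exact hdet_ne c hc
end

section
/- Let m ≥ 2 and n ≥ 1 be integers and let ν ↦ A_ν be a linear Hermitian family of n×n matrices such that all eigenvalues of A_ν are nonzero (equivalently, A_ν is invertible) for every ν ∈ ℝ^m with |ν| = 1. Then for every ν with |ν| = 1, the number of positive eigenvalues of A_ν, counted with multiplicity, equals the number of negative eigenvalues of A_ν counted with multiplicity; in particular each of these numbers equals n/2. -/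
open Matrix Finset

namespace St2

noncomputable def En {N : ℕ} (x : Fin N → ℂ) : ℝ := ∑ i, Complex.normSq (x i)

lemma En_nonneg {N : ℕ} (x : Fin N → ℂ) : 0 ≤ En x :=
  Finset.sum_nonneg fun i _ => Complex.normSq_nonneg _

lemma En_pos {N : ℕ} {x : Fin N → ℂ} (hx : x ≠ 0) : 0 < En x := by
  obtain ⟨i, hi⟩ := Function.ne_iff.mp hx
  have : 0 < Complex.normSq (x i) := Complex.normSq_pos.mpr hi
  exact lt_of_lt_of_le this (Finset.single_le_sum (fun j _ => Complex.normSq_nonneg _) (mem_univ i))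

lemma En_eq_re {N : ℕ} (x : Fin N → ℂ) : En x = (star x ⬝ᵥ x).re := by
  rw [dotProduct, Complex.re_sum]
  refine Finset.sum_congr rfl fun i _ => ?_
  simp [Complex.normSq_eq_conj_mul_self, Complex.normSq_apply]

lemma diag_form {N : ℕ} (lam : Fin N → ℝ) (y : Fin N → ℂ) :
    (star y ⬝ᵥ ((Matrix.diagonal (Complex.ofReal ∘ lam)) *ᵥ y)).re
      = ∑ i, lam i * Complex.normSq (y i) := by
  rw [dotProduct, Complex.re_sum]
  refine Finset.sum_congr rfl fun i _ => ?_
  simp only [Matrix.mulVec_diagonal, Pi.star_apply, Function.comp_apply, Complex.star_def]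
  have : (starRingEnd ℂ) (y i) * (Complex.ofReal (lam i) * y i)
      = Complex.ofReal (lam i) * Complex.ofReal (Complex.normSq (y i)) := by
    rw [Complex.normSq_eq_conj_mul_self]; ring
  rw [this]
  simp

lemma unitary_dot {N : ℕ} {U : Matrix (Fin N) (Fin N) ℂ}
    (hU : U ∈ Matrix.unitaryGroup (Fin N) ℂ) (y w : Fin N → ℂ) :
    star (U *ᵥ y) ⬝ᵥ (U *ᵥ w) = star y ⬝ᵥ w := by
  rw [Matrix.star_mulVec, Matrix.dotProduct_mulVec, Matrix.vecMul_vecMul,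
    ← Matrix.star_eq_conjTranspose, hU.1, Matrix.vecMul_one]

lemma En_unitary {N : ℕ} {U : Matrix (Fin N) (Fin N) ℂ}
    (hU : U ∈ Matrix.unitaryGroup (Fin N) ℂ) (y : Fin N → ℂ) :
    En (U *ᵥ y) = En y := by
  rw [En_eq_re, En_eq_re, unitary_dot hU]

lemma form_decomp {N : ℕ} {A : Matrix (Fin N) (Fin N) ℂ} (hA : A.IsHermitian) (y : Fin N → ℂ) :
    (star ((hA.eigenvectorUnitary : Matrix (Fin N) (Fin N) ℂ) *ᵥ y) ⬝ᵥ
      (A *ᵥ ((hA.eigenvectorUnitary : Matrix (Fin N) (Fin N) ℂ) *ᵥ y))).re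
      = ∑ i, hA.eigenvalues i * Complex.normSq (y i) := by
  set U := (hA.eigenvectorUnitary : Matrix (Fin N) (Fin N) ℂ) with hUdef
  have hU : U ∈ Matrix.unitaryGroup (Fin N) ℂ := hA.eigenvectorUnitary.2
  have hsp : A = U * Matrix.diagonal (Complex.ofReal ∘ hA.eigenvalues) * star U :=
    hA.spectral_theorem
  have h1 : A *ᵥ (U *ᵥ y)
      = U *ᵥ ((Matrix.diagonal (Complex.ofReal ∘ hA.eigenvalues)) *ᵥ y) := by
    have key : (U * Matrix.diagonal (Complex.ofReal ∘ hA.eigenvalues) * star U) *ᵥ (U *ᵥ y)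
        = U *ᵥ ((Matrix.diagonal (Complex.ofReal ∘ hA.eigenvalues)) *ᵥ y) := by
      simp only [← Matrix.mulVec_mulVec]
      rw [Matrix.mulVec_mulVec y (star U) U, hU.1, Matrix.one_mulVec]
    rw [← hsp] at key
    exact key
  rw [h1, unitary_dot hU, diag_form]

lemma sum_bounds {N : ℕ} (lam : Fin N → ℝ) (w : Fin N → ℂ) (S : Finset (Fin N))
    (hw : ∀ i ∉ S, w i = 0) :
    (∀ c : ℝ, (∀ i ∈ S, c ≤ lam i) → c * En w ≤ ∑ i, lam i * Complex.normSq (w i)) ∧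
    (∀ c : ℝ, (∀ i ∈ S, lam i ≤ c) → ∑ i, lam i * Complex.normSq (w i) ≤ c * En w) := by
  have hEn : En w = ∑ i ∈ S, Complex.normSq (w i) := by
    rw [En]
    exact (Finset.sum_subset (Finset.subset_univ S)
      (fun i _ hi => by rw [hw i hi]; simp)).symm
  have hsum : ∑ i, lam i * Complex.normSq (w i) = ∑ i ∈ S, lam i * Complex.normSq (w i) :=
    (Finset.sum_subset (Finset.subset_univ S)
      (fun i _ hi => by rw [hw i hi]; simp)).symm
  constructor <;> intro c hc <;> rw [hEn, hsum, Finset.mul_sum] <;>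
    refine Finset.sum_le_sum fun i hi => ?_
  · exact mul_le_mul_of_nonneg_right (hc i hi) (Complex.normSq_nonneg _)
  · exact mul_le_mul_of_nonneg_right (hc i hi) (Complex.normSq_nonneg _)

lemma core {N : ℕ} {A B : Matrix (Fin N) (Fin N) ℂ} (hA : A.IsHermitian) (hB : B.IsHermitian)
    (S T : Finset (Fin N)) (hcard : N < S.card + T.card) :
    ∃ x : Fin N → ℂ, x ≠ 0 ∧
      (∀ c : ℝ, (∀ i ∈ S, c ≤ hA.eigenvalues i) → c * En x ≤ (star x ⬝ᵥ (A *ᵥ x)).re) ∧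
      (∀ c : ℝ, (∀ i ∈ S, hA.eigenvalues i ≤ c) → (star x ⬝ᵥ (A *ᵥ x)).re ≤ c * En x) ∧
      (∀ c : ℝ, (∀ i ∈ T, c ≤ hB.eigenvalues i) → c * En x ≤ (star x ⬝ᵥ (B *ᵥ x)).re) ∧
      (∀ c : ℝ, (∀ i ∈ T, hB.eigenvalues i ≤ c) → (star x ⬝ᵥ (B *ᵥ x)).re ≤ c * En x) := by
  set U := (hA.eigenvectorUnitary : Matrix (Fin N) (Fin N) ℂ) with hUdef
  set V := (hB.eigenvectorUnitary : Matrix (Fin N) (Fin N) ℂ) with hVdef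
  have hU : U ∈ Matrix.unitaryGroup (Fin N) ℂ := hA.eigenvectorUnitary.2
  have hV : V ∈ Matrix.unitaryGroup (Fin N) ℂ := hB.eigenvectorUnitary.2
  set M : Matrix (Fin N) (Fin N) ℂ := star V * U with hMdef
  set L := (Matrix.of fun (j : {j // j ∈ Tᶜ}) (i : {i // i ∈ S}) => M j i).mulVecLin with hLdef
  have hker : ∃ y₀ : {i // i ∈ S} → ℂ, y₀ ≠ 0 ∧ L y₀ = 0 := by
    have hni : ¬ Function.Injective L := by
      intro hinj
      have h := LinearMap.finrank_le_finrank_of_injective hinj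
      simp only [Module.finrank_pi, Fintype.card_coe] at h
      rw [Finset.card_compl, Fintype.card_fin] at h
      have hT : T.card ≤ N := by simpa using Finset.card_le_univ T
      omega
    obtain ⟨a, b, hab, hne⟩ := Function.not_injective_iff.mp hni
    exact ⟨a - b, sub_ne_zero.mpr hne, by rw [map_sub, hab, sub_self]⟩
  obtain ⟨y₀, hy₀, hLy₀⟩ := hker
  set yy : Fin N → ℂ := fun i => if h : i ∈ S then y₀ ⟨i, h⟩ else 0 with hyydef
  have hyyS : ∀ i ∉ S, yy i = 0 := fun i hi => dif_neg hi
  have hyy : yy ≠ 0 := by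
    obtain ⟨i, hi⟩ := Function.ne_iff.mp hy₀
    intro h
    apply hi
    have := congrFun h i.1
    simpa [hyydef, i.2] using this
  set x := U *ᵥ yy with hxdef
  have hrecov : star U *ᵥ x = yy := by
    rw [hxdef, Matrix.mulVec_mulVec, hU.1, Matrix.one_mulVec]
  have hx : x ≠ 0 := by
    intro h
    apply hyy
    rw [← hrecov, h, Matrix.mulVec_zero]
  set z := M *ᵥ yy with hzdef
  have hzx : z = star V *ᵥ x := by
    rw [hzdef, hxdef, Matrix.mulVec_mulVec]
  have hxz : x = V *ᵥ z := by
    rw [hzx, Matrix.mulVec_mulVec, hV.2, Matrix.one_mulVec]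
  have hzT : ∀ j ∉ T, z j = 0 := by
    intro j hj
    have hjc : j ∈ Tᶜ := Finset.mem_compl.mpr hj
    have h1 : z j = ∑ i : {i // i ∈ S}, M j i * y₀ i := by
      rw [hzdef]
      show (∑ i, M j i * yy i) = _
      rw [← Finset.sum_subset (Finset.subset_univ S)
        (fun i _ hi => by rw [hyyS i hi, mul_zero]),
        ← Finset.sum_attach S (fun i => M j i * yy i), Finset.univ_eq_attach]
      refine Finset.sum_congr rfl fun i _ => ?_
      have : yy i.1 = y₀ i := by rw [hyydef]; simp [i.2]
      rw [this]
    have h2 : (∑ i : {i // i ∈ S}, M j i * y₀ i) = (L y₀) ⟨j, hjc⟩ := by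
      rw [hLdef]
      simp [Matrix.mulVecLin_apply, Matrix.mulVec, dotProduct]
    rw [h1, h2, hLy₀]
    rfl
  have hformA : (star x ⬝ᵥ (A *ᵥ x)).re = ∑ i, hA.eigenvalues i * Complex.normSq (yy i) :=
    form_decomp hA yy
  have hEnA : En x = En yy := En_unitary hU yy
  have hformB : (star x ⬝ᵥ (B *ᵥ x)).re = ∑ i, hB.eigenvalues i * Complex.normSq (z i) := by
    rw [hxz]; exact form_decomp hB z
  have hEnB : En x = En z := by rw [hxz]; exact En_unitary hV z
  obtain ⟨bA1, bA2⟩ := sum_bounds hA.eigenvalues yy S hyyS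
  obtain ⟨bB1, bB2⟩ := sum_bounds hB.eigenvalues z T hzT
  exact ⟨x, hx,
    fun c hc => by rw [hEnA, hformA]; exact bA1 c hc,
    fun c hc => by rw [hEnA, hformA]; exact bA2 c hc,
    fun c hc => by rw [hEnB, hformB]; exact bB1 c hc,
    fun c hc => by rw [hEnB, hformB]; exact bB2 c hc⟩

noncomputable def pc {N : ℕ} (M : Matrix (Fin N) (Fin N) ℂ) : ℕ :=
  if h : M.IsHermitian then (Finset.univ.filter fun i => 0 < h.eigenvalues i).card else 0

noncomputable def nc {N : ℕ} (M : Matrix (Fin N) (Fin N) ℂ) : ℕ :=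
  if h : M.IsHermitian then (Finset.univ.filter fun i => h.eigenvalues i < 0).card else 0

lemma pc_eq {N : ℕ} {M : Matrix (Fin N) (Fin N) ℂ} (h : M.IsHermitian) :
    pc M = (Finset.univ.filter fun i => 0 < h.eigenvalues i).card := dif_pos h

lemma nc_eq {N : ℕ} {M : Matrix (Fin N) (Fin N) ℂ} (h : M.IsHermitian) :
    nc M = (Finset.univ.filter fun i => h.eigenvalues i < 0).card := dif_pos h

lemma eig_ne_zero {N : ℕ} {M : Matrix (Fin N) (Fin N) ℂ} (h : M.IsHermitian) (hu : IsUnit M) :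
    ∀ i, h.eigenvalues i ≠ 0 := by
  intro i
  have hdet : M.det ≠ 0 := by
    have := (Matrix.isUnit_iff_isUnit_det M).mp hu
    exact isUnit_iff_ne_zero.mp this
  rw [h.det_eq_prod_eigenvalues] at hdet
  have := Finset.prod_ne_zero_iff.mp hdet i (mem_univ i)
  exact_mod_cast fun hz => this (by rw [hz]; norm_num)

lemma pc_add_nc {N : ℕ} {M : Matrix (Fin N) (Fin N) ℂ} (h : M.IsHermitian) (hu : IsUnit M) :
    pc M + nc M = N := by
  rw [pc_eq h, nc_eq h]
  have : (Finset.univ.filter fun i => h.eigenvalues i < 0)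
      = Finset.univ.filter fun i => ¬ 0 < h.eigenvalues i := by
    refine Finset.filter_congr fun i _ => ?_
    have := eig_ne_zero h hu i
    constructor
    · intro hlt; exact not_lt.mpr hlt.le
    · intro hnlt; exact lt_of_le_of_ne (not_lt.mp hnlt) this
  rw [this, Finset.card_filter_add_card_filter_not, Finset.card_univ, Fintype.card_fin]

lemma card_nonpos {N : ℕ} {M : Matrix (Fin N) (Fin N) ℂ} (h : M.IsHermitian) :
    pc M + (Finset.univ.filter fun i => h.eigenvalues i ≤ 0).card = N := by
  rw [pc_eq h]
  have : (Finset.univ.filter fun i => h.eigenvalues i ≤ 0)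
      = Finset.univ.filter fun i => ¬ 0 < h.eigenvalues i := by
    refine Finset.filter_congr fun i _ => ?_; exact not_lt.symm
  rw [this, Finset.card_filter_add_card_filter_not, Finset.card_univ, Fintype.card_fin]

lemma card_nonneg {N : ℕ} {M : Matrix (Fin N) (Fin N) ℂ} (h : M.IsHermitian) :
    nc M + (Finset.univ.filter fun i => 0 ≤ h.eigenvalues i).card = N := by
  rw [nc_eq h]
  have : (Finset.univ.filter fun i => 0 ≤ h.eigenvalues i)
      = Finset.univ.filter fun i => ¬ h.eigenvalues i < 0 := by
    refine Finset.filter_congr fun i _ => ?_; exact not_lt.symm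
  rw [this, Finset.card_filter_add_card_filter_not, Finset.card_univ, Fintype.card_fin]

lemma form_neg {N : ℕ} (M : Matrix (Fin N) (Fin N) ℂ) (x : Fin N → ℂ) :
    (star x ⬝ᵥ ((-M) *ᵥ x)).re = -(star x ⬝ᵥ (M *ᵥ x)).re := by
  rw [Matrix.neg_mulVec, dotProduct_neg]
  simp

lemma pc_mono {N : ℕ} {P Q : Matrix (Fin N) (Fin N) ℂ} (hP : P.IsHermitian) (hQ : Q.IsHermitian)
    (c : ℝ) (hc : 0 < c)
    (hgap : ∀ i, 0 < hP.eigenvalues i → c ≤ hP.eigenvalues i)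
    (hpert : ∀ x : Fin N → ℂ,
      |(star x ⬝ᵥ (Q *ᵥ x)).re - (star x ⬝ᵥ (P *ᵥ x)).re| ≤ c / 2 * En x) :
    pc P ≤ pc Q := by
  by_contra hlt
  push_neg at hlt
  set S := Finset.univ.filter (fun i => 0 < hP.eigenvalues i) with hS
  set T := Finset.univ.filter (fun i => hQ.eigenvalues i ≤ 0) with hT
  have hSc : S.card = pc P := (pc_eq hP).symm
  have hTc : pc Q + T.card = N := card_nonpos hQ
  have hcard : N < S.card + T.card := by omega
  obtain ⟨x, hx, b1, -, -, b4⟩ := core hP hQ S T hcard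
  have h1 : c * En x ≤ (star x ⬝ᵥ (P *ᵥ x)).re :=
    b1 c fun i hi => hgap i (Finset.mem_filter.mp hi).2
  have h2 : (star x ⬝ᵥ (Q *ᵥ x)).re ≤ 0 * En x :=
    b4 0 fun i hi => (Finset.mem_filter.mp hi).2
  have h3 := abs_le.mp (hpert x)
  have hE := En_pos hx
  nlinarith [h3.1, h3.2]

lemma nc_mono {N : ℕ} {P Q : Matrix (Fin N) (Fin N) ℂ} (hP : P.IsHermitian) (hQ : Q.IsHermitian)
    (c : ℝ) (hc : 0 < c)
    (hgap : ∀ i, hP.eigenvalues i < 0 → hP.eigenvalues i ≤ -c)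
    (hpert : ∀ x : Fin N → ℂ,
      |(star x ⬝ᵥ (Q *ᵥ x)).re - (star x ⬝ᵥ (P *ᵥ x)).re| ≤ c / 2 * En x) :
    nc P ≤ nc Q := by
  by_contra hlt
  push_neg at hlt
  set S := Finset.univ.filter (fun i => hP.eigenvalues i < 0) with hS
  set T := Finset.univ.filter (fun i => 0 ≤ hQ.eigenvalues i) with hT
  have hSc : S.card = nc P := (nc_eq hP).symm
  have hTc : nc Q + T.card = N := card_nonneg hQ
  have hcard : N < S.card + T.card := by omega
  obtain ⟨x, hx, -, b2, b3, -⟩ := core hP hQ S T hcard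
  have h1 : (star x ⬝ᵥ (P *ᵥ x)).re ≤ -c * En x :=
    b2 (-c) fun i hi => hgap i (Finset.mem_filter.mp hi).2
  have h2 : 0 * En x ≤ (star x ⬝ᵥ (Q *ᵥ x)).re :=
    b3 0 fun i hi => (Finset.mem_filter.mp hi).2
  have h3 := abs_le.mp (hpert x)
  have hE := En_pos hx
  nlinarith [h3.1, h3.2]

lemma pc_neg {N : ℕ} {M : Matrix (Fin N) (Fin N) ℂ} (hM : M.IsHermitian)
    (hMn : (-M).IsHermitian) : pc (-M) = nc M := by
  refine le_antisymm ?_ ?_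
  · -- pc (-M) ≤ nc M
    by_contra hlt
    push_neg at hlt
    set S := Finset.univ.filter (fun i => 0 < hMn.eigenvalues i) with hS
    have hSc : S.card = pc (-M) := (pc_eq hMn).symm
    have hSne : S.Nonempty := by
      rw [← Finset.card_pos, hSc]; omega
    obtain ⟨i0, hi0, hmin⟩ := Finset.exists_min_image S (fun i => hMn.eigenvalues i) hSne
    set c := hMn.eigenvalues i0 with hcdef
    have hc : 0 < c := (Finset.mem_filter.mp hi0).2
    set T := Finset.univ.filter (fun i => 0 ≤ hM.eigenvalues i) with hT
    have hTc : nc M + T.card = N := card_nonneg hM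
    have hcard : N < S.card + T.card := by omega
    obtain ⟨x, hx, b1, -, b3, -⟩ := core hMn hM S T hcard
    have h1 : c * En x ≤ (star x ⬝ᵥ ((-M) *ᵥ x)).re := b1 c hmin
    have h2 : 0 * En x ≤ (star x ⬝ᵥ (M *ᵥ x)).re :=
      b3 0 fun i hi => (Finset.mem_filter.mp hi).2
    rw [form_neg] at h1
    have hE := En_pos hx
    nlinarith
  · -- nc M ≤ pc (-M)
    by_contra hlt
    push_neg at hlt
    set S := Finset.univ.filter (fun i => hM.eigenvalues i < 0) with hS
    have hSc : S.card = nc M := (nc_eq hM).symm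
    have hSne : S.Nonempty := by
      rw [← Finset.card_pos, hSc]; omega
    obtain ⟨i0, hi0, hmax⟩ := Finset.exists_max_image S (fun i => hM.eigenvalues i) hSne
    set c := -hM.eigenvalues i0 with hcdef
    have hc : 0 < c := by
      have := (Finset.mem_filter.mp hi0).2; simp [hcdef]; linarith
    set T := Finset.univ.filter (fun i => hMn.eigenvalues i ≤ 0) with hT
    have hTc : pc (-M) + T.card = N := card_nonpos hMn
    have hcard : N < S.card + T.card := by omega
    obtain ⟨x, hx, -, b2, -, b4⟩ := core hM hMn S T hcard
    have h1 : (star x ⬝ᵥ (M *ᵥ x)).re ≤ -c * En x := by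
      refine b2 (-c) fun i hi => ?_
      have := hmax i hi
      simp only [hcdef, neg_neg]
      exact this
    have h2 : (star x ⬝ᵥ ((-M) *ᵥ x)).re ≤ 0 * En x :=
      b4 0 fun i hi => (Finset.mem_filter.mp hi).2
    rw [form_neg] at h2
    have hE := En_pos hx
    nlinarith

lemma form_bound {N : ℕ} (M : Matrix (Fin N) (Fin N) ℂ) (x : Fin N → ℂ) :
    |(star x ⬝ᵥ (M *ᵥ x)).re| ≤ (∑ i, ∑ j, ‖M i j‖) * En x := by
  have hxx : ∀ i j : Fin N, ‖x i‖ * ‖x j‖ ≤ En x := by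
    intro i j
    have hi : ‖x i‖ ^ 2 ≤ En x := by
      rw [Complex.sq_norm]
      exact Finset.single_le_sum (fun k _ => Complex.normSq_nonneg _) (mem_univ i)
    have hj : ‖x j‖ ^ 2 ≤ En x := by
      rw [Complex.sq_norm]
      exact Finset.single_le_sum (fun k _ => Complex.normSq_nonneg _) (mem_univ j)
    nlinarith [norm_nonneg (x i), norm_nonneg (x j), sq_nonneg (‖x i‖ - ‖x j‖)]
  have hexp : star x ⬝ᵥ (M *ᵥ x) = ∑ i, ∑ j, star (x i) * M i j * x j := by
    simp only [dotProduct, Matrix.mulVec, Pi.star_apply, Finset.mul_sum]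
    exact Finset.sum_congr rfl fun i _ => Finset.sum_congr rfl fun j _ => by ring
  calc |(star x ⬝ᵥ (M *ᵥ x)).re| ≤ ‖star x ⬝ᵥ (M *ᵥ x)‖ := Complex.abs_re_le_norm _
    _ = ‖∑ i, ∑ j, star (x i) * M i j * x j‖ := by rw [hexp]
    _ ≤ ∑ i, ∑ j, ‖star (x i) * M i j * x j‖ := by
        refine (norm_sum_le _ _).trans (Finset.sum_le_sum fun i _ => ?_)
        exact norm_sum_le _ _
    _ ≤ ∑ i, ∑ j, ‖M i j‖ * En x := by
        refine Finset.sum_le_sum fun i _ => Finset.sum_le_sum fun j _ => ?_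
        rw [norm_mul, norm_mul]
        have : ‖star (x i)‖ = ‖x i‖ := by
          rw [Complex.star_def, Complex.norm_conj]
        rw [this]
        calc ‖x i‖ * ‖M i j‖ * ‖x j‖
            = ‖M i j‖ * (‖x i‖ * ‖x j‖) := by ring
          _ ≤ ‖M i j‖ * En x :=
              mul_le_mul_of_nonneg_left (hxx i j) (norm_nonneg _)
    _ = (∑ i, ∑ j, ‖M i j‖) * En x := by
        rw [Finset.sum_mul]
        exact Finset.sum_congr rfl fun i _ => (Finset.sum_mul _ _ _).symm

lemma const_of_loc (g : ℝ → ℕ)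
    (hloc : ∀ t ∈ Set.Icc (0:ℝ) 1, ∃ δ > 0, ∀ s ∈ Set.Icc (0:ℝ) 1, |s - t| < δ → g s = g t) :
    g 0 = g 1 := by
  set X := Set.Icc (0:ℝ) 1 with hX
  have h0 : (0:ℝ) ∈ X := by constructor <;> norm_num
  have h1 : (1:ℝ) ∈ X := by constructor <;> norm_num
  haveI : PreconnectedSpace X := Subtype.preconnectedSpace isPreconnected_Icc
  set Sset : Set X := {t | g t = g 0} with hSset
  have hdist : ∀ s t : X, dist s t = |(s:ℝ) - (t:ℝ)| := fun s t => by
    rw [Subtype.dist_eq, Real.dist_eq]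
  have hopen : IsOpen Sset := by
    rw [Metric.isOpen_iff]
    intro t ht
    obtain ⟨δ, hδ, hl⟩ := hloc t t.2
    refine ⟨δ, hδ, fun s hs => ?_⟩
    have hd : |(s:ℝ) - (t:ℝ)| < δ := by rw [← hdist]; exact Metric.mem_ball.mp hs
    show g s = g 0
    rw [hl s s.2 hd]
    exact ht
  have hclosed : IsClosed Sset := by
    rw [← isOpen_compl_iff, Metric.isOpen_iff]
    intro t ht
    obtain ⟨δ, hδ, hl⟩ := hloc t t.2
    refine ⟨δ, hδ, fun s hs => ?_⟩
    intro hsS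
    apply ht
    have hd : |(s:ℝ) - (t:ℝ)| < δ := by rw [← hdist]; exact Metric.mem_ball.mp hs
    show g t = g 0
    rw [← hl s s.2 hd]
    exact hsS
  have huniv : Sset = Set.univ := IsClopen.eq_univ ⟨hclosed, hopen⟩ ⟨⟨0, h0⟩, rfl⟩
  have : (⟨1, h1⟩ : X) ∈ Sset := by rw [huniv]; trivial
  exact this.symm

lemma seg_const {N : ℕ} (P Q : Matrix (Fin N) (Fin N) ℂ)
    (hH : ∀ t : ℝ, ((1 - t) • P + t • Q).IsHermitian)
    (hinv : ∀ t ∈ Set.Icc (0:ℝ) 1, IsUnit ((1 - t) • P + t • Q)) :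
    pc P = pc Q ∧ nc P = nc Q := by
  set D : ℝ → Matrix (Fin N) (Fin N) ℂ := fun t => (1 - t) • P + t • Q with hD
  have hD0 : D 0 = P := by simp [hD]
  have hD1 : D 1 = Q := by simp [hD]
  set K : ℝ := (∑ i, ∑ j, ‖(Q - P) i j‖) + 1 with hK
  have hKpos : 0 < K := by
    have : (0:ℝ) ≤ ∑ i, ∑ j, ‖(Q - P) i j‖ :=
      Finset.sum_nonneg fun i _ => Finset.sum_nonneg fun j _ => norm_nonneg _
    linarith
  have hdiff : ∀ s t : ℝ, D s - D t = (s - t) • (Q - P) := by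
    intro s t
    simp only [hD]
    module
  have hformdiff : ∀ (s t : ℝ) (x : Fin N → ℂ),
      |(star x ⬝ᵥ (D s *ᵥ x)).re - (star x ⬝ᵥ (D t *ᵥ x)).re| ≤ |s - t| * K * En x := by
    intro s t x
    have h1 : (star x ⬝ᵥ (D s *ᵥ x)).re - (star x ⬝ᵥ (D t *ᵥ x)).re
        = (star x ⬝ᵥ ((D s - D t) *ᵥ x)).re := by
      rw [Matrix.sub_mulVec, dotProduct_sub, Complex.sub_re]
    rw [h1, hdiff s t]
    have h2 : ((s - t) • (Q - P)) *ᵥ x = (s - t) • ((Q - P) *ᵥ x) :=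
      Matrix.smul_mulVec _ _ _
    rw [h2, dotProduct_smul]
    have h3 : ((s - t) • (star x ⬝ᵥ ((Q - P) *ᵥ x))).re
        = (s - t) * (star x ⬝ᵥ ((Q - P) *ᵥ x)).re := by
      rw [Complex.real_smul, Complex.re_ofReal_mul]
    rw [h3, abs_mul]
    have h4 := form_bound (Q - P) x
    have h5 : (∑ i, ∑ j, ‖(Q - P) i j‖) * En x ≤ K * En x :=
      mul_le_mul_of_nonneg_right (by linarith) (En_nonneg x)
    calc |s - t| * |(star x ⬝ᵥ ((Q - P) *ᵥ x)).re| ≤ |s - t| * (K * En x) := by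
          exact mul_le_mul_of_nonneg_left (h4.trans h5) (abs_nonneg _)
      _ = |s - t| * K * En x := by ring
  have hloc : ∀ t ∈ Set.Icc (0:ℝ) 1, ∃ δ > 0, ∀ s ∈ Set.Icc (0:ℝ) 1, |s - t| < δ →
      pc (D s) = pc (D t) ∧ nc (D s) = nc (D t) := by
    intro t ht
    have hHt := hH t
    have hUt := hinv t ht
    have hgap : ∃ c > 0, ∀ i, c ≤ |hHt.eigenvalues i| := by
      rcases Nat.eq_zero_or_pos N with h0 | hpos
      · subst h0
        exact ⟨1, one_pos, fun i => Fin.elim0 i⟩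
      · have : (Finset.univ : Finset (Fin N)).Nonempty := by
          rw [← Finset.card_pos, Finset.card_univ, Fintype.card_fin]; omega
        obtain ⟨i0, _, hmin⟩ := Finset.exists_min_image Finset.univ
          (fun i => |hHt.eigenvalues i|) this
        refine ⟨|hHt.eigenvalues i0|, ?_, fun i => hmin i (mem_univ i)⟩
        exact abs_pos.mpr (eig_ne_zero hHt hUt i0)
    obtain ⟨c, hc, hcgap⟩ := hgap
    refine ⟨c / (2 * K), div_pos hc (by linarith), fun s hs hst => ?_⟩
    have hpert : ∀ x : Fin N → ℂ,
        |(star x ⬝ᵥ (D s *ᵥ x)).re - (star x ⬝ᵥ (D t *ᵥ x)).re| ≤ c / 2 * En x := by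
      intro x
      refine (hformdiff s t x).trans ?_
      have h6 : |s - t| * K ≤ c / 2 := by
        have h7 : |s - t| * K ≤ (c / (2 * K)) * K :=
          mul_le_mul_of_nonneg_right hst.le hKpos.le
        have h8 : (c / (2 * K)) * K = c / 2 := by field_simp
        linarith
      exact mul_le_mul_of_nonneg_right h6 (En_nonneg x)
    have hp : pc (D t) ≤ pc (D s) := by
      refine pc_mono hHt (hH s) c hc (fun i hi => ?_) hpert
      have := hcgap i
      rwa [abs_of_pos hi] at this
    have hnn : nc (D t) ≤ nc (D s) := by
      refine nc_mono hHt (hH s) c hc (fun i hi => ?_) hpert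
      have := hcgap i
      rw [abs_of_neg hi] at this
      linarith
    have hsume : pc (D s) + nc (D s) = N := pc_add_nc (hH s) (hinv s hs)
    have hsumt : pc (D t) + nc (D t) = N := pc_add_nc hHt hUt
    omega
  have hp := const_of_loc (fun t => pc (D t)) (fun t ht => by
    obtain ⟨δ, hδ, hl⟩ := hloc t ht
    exact ⟨δ, hδ, fun s hs hd => (hl s hs hd).1⟩)
  have hnn := const_of_loc (fun t => nc (D t)) (fun t ht => by
    obtain ⟨δ, hδ, hl⟩ := hloc t ht
    exact ⟨δ, hδ, fun s hs hd => (hl s hs hd).2⟩)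
  have hp' : pc (D 0) = pc (D 1) := hp
  have hnn' : nc (D 0) = nc (D 1) := hnn
  rw [hD0, hD1] at hp' hnn'
  exact ⟨hp', hnn'⟩

end St2

open St2

/-- Let `m ≥ 2`, `n ≥ 1` and let `ν ↦ A ν` be a linear Hermitian family of
`n × n` complex matrices such that `A ν` is invertible (all eigenvalues nonzero) for every unit
vector `ν`.  Then for every unit vector `ν` the number of positive eigenvalues of `A ν`, counted
with multiplicity, equals the number of negative eigenvalues, and each of these numbers is
`n / 2` (i.e. twice each of them is `n`). -/
theorem statement_2 (m n : ℕ) (hm : 2 ≤ m) (hn : 1 ≤ n)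
    (A : EuclideanSpace ℝ (Fin m) →ₗ[ℝ] Matrix (Fin n) (Fin n) ℂ)
    (hHerm : ∀ ν, (A ν).IsHermitian)
    (hinv : ∀ ν : EuclideanSpace ℝ (Fin m), ‖ν‖ = 1 → IsUnit (A ν)) :
    ∀ ν : EuclideanSpace ℝ (Fin m), ‖ν‖ = 1 →
      (Finset.univ.filter fun i => 0 < (hHerm ν).eigenvalues i).card =
        (Finset.univ.filter fun i => (hHerm ν).eigenvalues i < 0).card ∧
      2 * (Finset.univ.filter fun i => 0 < (hHerm ν).eigenvalues i).card = n ∧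
      2 * (Finset.univ.filter fun i => (hHerm ν).eigenvalues i < 0).card = n := by
  intro ν hν
  -- invertibility for all nonzero vectors
  have invnz : ∀ u : EuclideanSpace ℝ (Fin m), u ≠ 0 → IsUnit (A u) := by
    intro u hu
    set v := ‖u‖⁻¹ • u with hvdef
    have hv : ‖v‖ = 1 := norm_smul_inv_norm hu
    have hAu : A u = (‖u‖ : ℂ) • A v := by
      have h1 : A v = ‖u‖⁻¹ • A u := by rw [hvdef, _root_.map_smul]
      have h2 : (‖u‖ : ℝ) • A v = A u := by
        rw [h1, smul_smul]
        rw [mul_inv_cancel₀ (norm_ne_zero_iff.mpr hu), one_smul]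
      rw [← h2]
      ext i j
      simp [Complex.real_smul]
    rw [Matrix.isUnit_iff_isUnit_det, hAu, Matrix.det_smul]
    have hdet : IsUnit (A v).det := (Matrix.isUnit_iff_isUnit_det _).mp (hinv v hv)
    refine (IsUnit.mul ?_ hdet)
    refine isUnit_iff_ne_zero.mpr (pow_ne_zero _ ?_)
    exact_mod_cast norm_ne_zero_iff.mpr hu
  -- key step along a segment between orthogonal unit vectors
  have key : ∀ v w : EuclideanSpace ℝ (Fin m), ‖v‖ = 1 → ‖w‖ = 1 →
      (inner ℝ v w : ℝ) = 0 → pc (A v) = pc (A w) ∧ nc (A v) = nc (A w) := by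
    intro v w hv hw hvw
    have hAeq : ∀ t : ℝ, (1 - t) • A v + t • A w = A ((1 - t) • v + t • w) := by
      intro t
      rw [map_add, _root_.map_smul, _root_.map_smul]
    have hne : ∀ t : ℝ, (1 - t) • v + t • w ≠ 0 := by
      intro t h
      have h1 : (inner ℝ v ((1 - t) • v + t • w) : ℝ) = 1 - t := by
        rw [inner_add_right, real_inner_smul_right, real_inner_smul_right, hvw,
          real_inner_self_eq_norm_sq, hv]
        ring
      have h2 : (inner ℝ w ((1 - t) • v + t • w) : ℝ) = t := by
        have hc : (inner ℝ w v : ℝ) = 0 := by rw [real_inner_comm]; exact hvw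
        rw [inner_add_right, real_inner_smul_right, real_inner_smul_right, hc,
          real_inner_self_eq_norm_sq, hw]
        ring
      rw [h, inner_zero_right] at h1 h2
      have : (1:ℝ) - t = 0 := h1.symm
      have ht : t = (0:ℝ) := h2.symm
      rw [ht] at this
      norm_num at this
    refine seg_const (A v) (A w) (fun t => ?_) (fun t _ => ?_)
    · rw [hAeq t]; exact hHerm _
    · rw [hAeq t]; exact invnz _ (hne t)
  -- find a unit vector orthogonal to ν
  have hν0 : ν ≠ 0 := by
    intro h; rw [h, norm_zero] at hν; norm_num at hν
  obtain ⟨ω, hω, horth⟩ : ∃ ω : EuclideanSpace ℝ (Fin m), ‖ω‖ = 1 ∧ (inner ℝ ν ω : ℝ) = 0 := by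
    set W := (ℝ ∙ ν)ᗮ with hW
    have hfr : Module.finrank ℝ (ℝ ∙ ν) + Module.finrank ℝ W = m := by
      rw [hW, Submodule.finrank_add_finrank_orthogonal]
      exact finrank_euclideanSpace.trans (by simp)
    have hsp : Module.finrank ℝ (ℝ ∙ ν) = 1 := finrank_span_singleton hν0
    have hWpos : 0 < Module.finrank ℝ W := by omega
    obtain ⟨w, hw0⟩ := Module.finrank_pos_iff_exists_ne_zero.mp hWpos
    have hwne : (w : EuclideanSpace ℝ (Fin m)) ≠ 0 := fun h => hw0 (Subtype.ext h)
    refine ⟨‖(w : EuclideanSpace ℝ (Fin m))‖⁻¹ • w, norm_smul_inv_norm hwne, ?_⟩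
    rw [real_inner_smul_right]
    have hz : (inner ℝ ν (w : EuclideanSpace ℝ (Fin m)) : ℝ) = 0 := by
      have hmem : (w : EuclideanSpace ℝ (Fin m)) ∈ (ℝ ∙ ν)ᗮ := w.2
      exact (Submodule.mem_orthogonal (ℝ ∙ ν) (w : EuclideanSpace ℝ (Fin m))).mp hmem ν
        (Submodule.mem_span_singleton_self ν)
    rw [hz, mul_zero]
  -- combine
  have r1 := key ν ω hν hω horth
  have r2 : pc (A ω) = pc (A (-ν)) ∧ nc (A ω) = nc (A (-ν)) := by
    refine key ω (-ν) hω (by rw [norm_neg]; exact hν) ?_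
    rw [inner_neg_right, real_inner_comm, horth, neg_zero]
  have hnegmat : A (-ν) = -(A ν) := by rw [← map_neg]
  have hneg : pc (A (-ν)) = nc (A ν) := by
    have hH' : (-(A ν)).IsHermitian := hnegmat ▸ hHerm (-ν)
    have := pc_neg (hHerm ν) hH'
    rw [← this]
    congr 1
  have hsum : pc (A ν) + nc (A ν) = n := pc_add_nc (hHerm ν) (hinv ν hν)
  have hpn : pc (A ν) = nc (A ν) := by
    rw [r1.1, r2.1, hneg]
  have e1 : (Finset.univ.filter fun i => 0 < (hHerm ν).eigenvalues i).card = pc (A ν) :=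
    (pc_eq (hHerm ν)).symm
  have e2 : (Finset.univ.filter fun i => (hHerm ν).eigenvalues i < 0).card = nc (A ν) :=
    (nc_eq (hHerm ν)).symm
  refine ⟨by rw [e1, e2, hpn], by rw [e1]; omega, by rw [e2]; omega⟩
end

section
/- Let m ≥ 2 and n ≥ 1 be integers and let ν ↦ A_ν be a linear Hermitian family of 2n×2n matrices such that all eigenvalues of A_ν are nonzero for every ν ≠ 0. For 0 < r < 1 and ν ≠ 0 let μ_1^ν,…,μ_{2n}^ν denote the eigenvalues of A_ν counted with multiplicity, and define B(r,ν) = ∏_{j=1}^{2n} μ_j^ν · r^{μ_j^ν} / (1 − r^{μ_j^ν}) (equivalently B(r,ν) = det(f_r(A_ν)) with f_r(u) = u r^u/(1 − r^u) applied via the spectral functional calculus, so B is well defined independently of the ordering of the eigenvalues). Then B is real analytic on the open set {(r,ν) ∈ ℝ × ℝ^m : 0 < r < 1, ν ≠ 0}, jointly in (r,ν). -/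
open NormedSpace

attribute [local instance] Matrix.linftyOpNormedRing Matrix.linftyOpNormedAlgebra

lemma analyticAt_rlog {x : ℝ} (hx : 0 < x) : AnalyticAt ℝ Real.log x := by
  have h1 : AnalyticAt ℝ (fun y : ℝ => (Complex.log y).re) x := by
    have hc : AnalyticAt ℂ Complex.log (x : ℂ) :=
      analyticAt_clog (by simp [Complex.mem_slitPlane_iff, hx])
    exact Complex.reCLM.analyticAt _ |>.comp
      ((hc.restrictScalars).comp (Complex.ofRealCLM.analyticAt x))
  have : (fun y : ℝ => (Complex.log y).re) = Real.log := funext fun y => Complex.log_ofReal_re y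
  rwa [this] at h1

section Det
variable {E : Type*} [NormedAddCommGroup E] [NormedSpace ℝ E] {N : ℕ}

lemma analyticAt_entry {f : E → Matrix (Fin N) (Fin N) ℂ} {x : E}
    (hf : AnalyticAt ℝ f x) (i j : Fin N) : AnalyticAt ℝ (fun y => f y i j) x := by
  let L : Matrix (Fin N) (Fin N) ℂ →L[ℝ] ℂ :=
    LinearMap.toContinuousLinearMap
      ((LinearMap.proj (R := ℝ) (φ := fun _ : Fin N => ℂ) j).comp
        (LinearMap.proj (R := ℝ) (φ := fun _ : Fin N => Fin N → ℂ) i))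
  exact (L.analyticAt _).comp hf

lemma analyticAt_det {f : E → Matrix (Fin N) (Fin N) ℂ} {x : E}
    (hf : ∀ i j, AnalyticAt ℝ (fun y => f y i j) x) :
    AnalyticAt ℝ (fun y => (f y).det) x := by
  simp_rw [Matrix.det_apply']
  exact Finset.analyticAt_fun_sum _ fun σ _ =>
    (analyticAt_const.mul (Finset.analyticAt_fun_prod _ fun i _ => hf (σ i) i))
end Det

lemma herm_trace {N : ℕ} {M : Matrix (Fin N) (Fin N) ℂ} (hM : M.IsHermitian) :
    M.trace = ((∑ j, hM.eigenvalues j : ℝ) : ℂ) := by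
  have h1 : star (hM.eigenvectorUnitary : Matrix (Fin N) (Fin N) ℂ) *
      (hM.eigenvectorUnitary : Matrix (Fin N) (Fin N) ℂ) = 1 :=
    Matrix.mem_unitaryGroup_iff'.mp hM.eigenvectorUnitary.2
  calc M.trace
      = ((hM.eigenvectorUnitary : Matrix (Fin N) (Fin N) ℂ) *
          Matrix.diagonal (RCLike.ofReal ∘ hM.eigenvalues) *
          star (hM.eigenvectorUnitary : Matrix (Fin N) (Fin N) ℂ)).trace := by
        conv_lhs => rw [hM.spectral_theorem, Unitary.conjStarAlgAut_apply]
    _ = (star (hM.eigenvectorUnitary : Matrix (Fin N) (Fin N) ℂ) *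
          (hM.eigenvectorUnitary : Matrix (Fin N) (Fin N) ℂ) *
          Matrix.diagonal (RCLike.ofReal ∘ hM.eigenvalues)).trace := by
        rw [Matrix.trace_mul_cycle]
    _ = ((∑ j, hM.eigenvalues j : ℝ) : ℂ) := by
        rw [h1, one_mul, Matrix.trace_diagonal]
        push_cast
        rfl

lemma herm_det_one_sub_exp {N : ℕ} {M : Matrix (Fin N) (Fin N) ℂ} (hM : M.IsHermitian)
    {r : ℝ} (hr : 0 < r) :
    ((1 : Matrix (Fin N) (Fin N) ℂ) - exp (Real.log r • M)).det
      = ((∏ j, (1 - r ^ hM.eigenvalues j) : ℝ) : ℂ) := by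
  set U : Matrix (Fin N) (Fin N) ℂ := (hM.eigenvectorUnitary : Matrix (Fin N) (Fin N) ℂ) with hU'
  set D : Matrix (Fin N) (Fin N) ℂ := Matrix.diagonal (RCLike.ofReal ∘ hM.eigenvalues) with hD'
  have h1 : star U * U = 1 := Matrix.mem_unitaryGroup_iff'.mp hM.eigenvectorUnitary.2
  have h2 : U * star U = 1 := Matrix.mem_unitaryGroup_iff.mp hM.eigenvectorUnitary.2
  have hU : IsUnit U := ⟨⟨U, star U, h2, h1⟩, rfl⟩
  have hinv : U⁻¹ = star U := Matrix.inv_eq_left_inv h1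
  have hspec : M = U * D * U⁻¹ := by rw [hinv]; exact hM.spectral_theorem.trans (Unitary.conjStarAlgAut_apply _ _)
  have hsmul : Real.log r • M = U * (Real.log r • D) * U⁻¹ := by
    rw [hspec, Matrix.mul_smul, Matrix.smul_mul]
  rw [hsmul, Matrix.exp_conj U _ hU]
  have key : (1 : Matrix (Fin N) (Fin N) ℂ) - U * exp (Real.log r • D) * U⁻¹
      = U * ((1 : Matrix (Fin N) (Fin N) ℂ) - exp (Real.log r • D)) * U⁻¹ := by
    rw [Matrix.mul_sub, Matrix.sub_mul, mul_one, hinv, h2]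
  rw [key, Matrix.det_conj hU]
  have hDsmul : Real.log r • D
      = Matrix.diagonal (fun j => ((Real.log r * hM.eigenvalues j : ℝ) : ℂ)) := by
    ext i j
    by_cases h : i = j <;>
      simp [hD', Matrix.diagonal_apply, h, Complex.real_smul]
  rw [hDsmul, Matrix.exp_diagonal, ← Matrix.diagonal_one, Matrix.diagonal_sub,
    Matrix.det_diagonal, Complex.ofReal_prod]
  refine Finset.prod_congr rfl fun j _ => ?_
  have : exp (fun j => ((Real.log r * hM.eigenvalues j : ℝ) : ℂ)) j
      = Complex.exp ((Real.log r * hM.eigenvalues j : ℝ) : ℂ) := by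
    rw [Pi.coe_exp, ← Complex.exp_eq_exp_ℂ]
  rw [this, ← Complex.ofReal_exp, ← Real.rpow_def_of_pos hr]
  push_cast
  ring


/-- The factor `B(r,ν) = ∏ⱼ μⱼ^ν · r^{μⱼ^ν} / (1 − r^{μⱼ^ν})`, where `μ₁^ν, …, μ_{2n}^ν` are the
eigenvalues of the Hermitian matrix `A ν` counted with multiplicity (here `r ^ u` is the real
power `Real.rpow`).  It is well defined independently of the ordering of the eigenvalues. -/
noncomputable def Bfun {m N : ℕ}
    (A : EuclideanSpace ℝ (Fin m) →ₗ[ℝ] Matrix (Fin N) (Fin N) ℂ)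
    (hHerm : ∀ ν, (A ν).IsHermitian) :
    ℝ × EuclideanSpace ℝ (Fin m) → ℝ := fun p =>
  ∏ j : Fin N,
    ((hHerm p.2).eigenvalues j * p.1 ^ ((hHerm p.2).eigenvalues j) /
      (1 - p.1 ^ ((hHerm p.2).eigenvalues j)))

/-- (Lemma 5.1 of the paper.)  Let `m ≥ 2`, `n ≥ 1` and let `ν ↦ A ν` be a
linear Hermitian family of `2n × 2n` matrices all of whose eigenvalues are nonzero for every
`ν ≠ 0`.  Then `B(r,ν)` is real analytic, jointly in `(r,ν)`, on
`{(r,ν) : 0 < r < 1, ν ≠ 0}`. -/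
theorem statement_3 (m n : ℕ) (hm : 2 ≤ m) (hn : 1 ≤ n)
    (A : EuclideanSpace ℝ (Fin m) →ₗ[ℝ] Matrix (Fin (2 * n)) (Fin (2 * n)) ℂ)
    (hHerm : ∀ ν, (A ν).IsHermitian)
    (hev : ∀ ν : EuclideanSpace ℝ (Fin m), ν ≠ 0 → ∀ j, (hHerm ν).eigenvalues j ≠ 0) :
    AnalyticOnNhd ℝ (Bfun A hHerm)
      {p : ℝ × EuclideanSpace ℝ (Fin m) | 0 < p.1 ∧ p.1 < 1 ∧ p.2 ≠ 0} := by
  set S : Set (ℝ × EuclideanSpace ℝ (Fin m)) :=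
    {p : ℝ × EuclideanSpace ℝ (Fin m) | 0 < p.1 ∧ p.1 < 1 ∧ p.2 ≠ 0} with hS
  have hSopen : IsOpen S := by
    have h1 : IsOpen {p : ℝ × EuclideanSpace ℝ (Fin m) | 0 < p.1} :=
      isOpen_lt continuous_const continuous_fst
    have h2 : IsOpen {p : ℝ × EuclideanSpace ℝ (Fin m) | p.1 < 1} :=
      isOpen_lt continuous_fst continuous_const
    have h3 : IsOpen {p : ℝ × EuclideanSpace ℝ (Fin m) | p.2 ≠ 0} :=
      isOpen_ne_fun continuous_snd continuous_const
    have : S = ({p : ℝ × EuclideanSpace ℝ (Fin m) | 0 < p.1} ∩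
        {p | p.1 < 1} ∩ {p | p.2 ≠ 0}) := by
      ext p; simp [hS, and_assoc]
    rw [this]
    exact (h1.inter h2).inter h3
  set G : ℝ × EuclideanSpace ℝ (Fin m) → ℝ := fun p =>
    ((A p.2).det.re * Real.exp ((A p.2).trace.re * Real.log p.1)) /
      ((1 : Matrix (Fin (2*n)) (Fin (2*n)) ℂ) - exp (Real.log p.1 • A p.2)).det.re with hG
  -- pointwise equality on S
  have heq : ∀ p ∈ S, G p = Bfun A hHerm p := by
    rintro ⟨r, ν⟩ ⟨hr0, hr1, hν⟩
    have hA := hHerm ν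
    have hdet : (A ν).det.re = ∏ j, hA.eigenvalues j := by
      rw [hA.det_eq_prod_eigenvalues]
      norm_cast
    have htr : (A ν).trace.re = ∑ j, hA.eigenvalues j := by
      rw [herm_trace hA, Complex.ofReal_re]
    have hden : ((1 : Matrix (Fin (2*n)) (Fin (2*n)) ℂ) - exp (Real.log r • A ν)).det.re
        = ∏ j, (1 - r ^ hA.eigenvalues j) := by
      rw [herm_det_one_sub_exp hA hr0, Complex.ofReal_re]
    show ((A ν).det.re * Real.exp ((A ν).trace.re * Real.log r)) /
        ((1 : Matrix (Fin (2*n)) (Fin (2*n)) ℂ) - exp (Real.log r • A ν)).det.re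
      = ∏ j : Fin (2*n), (hA.eigenvalues j * r ^ hA.eigenvalues j / (1 - r ^ hA.eigenvalues j))
    rw [hdet, htr, hden, Finset.prod_div_distrib, Finset.prod_mul_distrib]
    congr 1
    congr 1
    rw [Finset.sum_mul, Real.exp_sum]
    refine Finset.prod_congr rfl fun j _ => ?_
    rw [Real.rpow_def_of_pos hr0, mul_comm]
  intro p hp
  obtain ⟨hr0, hr1, hν⟩ := hp
  -- analyticity of G at p
  have hA_an : AnalyticAt ℝ (fun q : ℝ × EuclideanSpace ℝ (Fin m) => A q.2) p := by
    exact ((LinearMap.toContinuousLinearMap A).comp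
      (ContinuousLinearMap.snd ℝ ℝ (EuclideanSpace ℝ (Fin m)))).analyticAt p
  have hdet1 : AnalyticAt ℝ (fun q : ℝ × EuclideanSpace ℝ (Fin m) => (A q.2).det.re) p := by
    exact (Complex.reCLM.analyticAt _).comp (analyticAt_det fun i j => analyticAt_entry hA_an i j)
  have htr1 : AnalyticAt ℝ (fun q : ℝ × EuclideanSpace ℝ (Fin m) => (A q.2).trace.re) p := by
    have : AnalyticAt ℝ (fun q : ℝ × EuclideanSpace ℝ (Fin m) => (A q.2).trace) p := by
      simp_rw [Matrix.trace]
      exact Finset.analyticAt_fun_sum _ fun i _ => analyticAt_entry hA_an i i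
    exact (Complex.reCLM.analyticAt _).comp this
  have hlog : AnalyticAt ℝ (fun q : ℝ × EuclideanSpace ℝ (Fin m) => Real.log q.1) p :=
    (analyticAt_rlog hr0).comp ((ContinuousLinearMap.fst ℝ ℝ (EuclideanSpace ℝ (Fin m))).analyticAt p)
  have hsmul : AnalyticAt ℝ
      (fun q : ℝ × EuclideanSpace ℝ (Fin m) => Real.log q.1 • A q.2) p := hlog.smul hA_an
  have hexpm : AnalyticAt ℝ
      (fun q : ℝ × EuclideanSpace ℝ (Fin m) => exp (Real.log q.1 • A q.2)) p :=
    (NormedSpace.exp_analytic _).comp hsmul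
  have hden_an : AnalyticAt ℝ (fun q : ℝ × EuclideanSpace ℝ (Fin m) =>
      ((1 : Matrix (Fin (2*n)) (Fin (2*n)) ℂ) - exp (Real.log q.1 • A q.2)).det.re) p := by
    exact (Complex.reCLM.analyticAt _).comp
      (analyticAt_det fun i j => analyticAt_entry (analyticAt_const.sub hexpm) i j)
  have hden_ne : ((1 : Matrix (Fin (2*n)) (Fin (2*n)) ℂ) - exp (Real.log p.1 • A p.2)).det.re ≠ 0 := by
    have hA := hHerm p.2
    rw [herm_det_one_sub_exp hA hr0, Complex.ofReal_re]
    refine Finset.prod_ne_zero_iff.mpr fun j _ => ?_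
    refine sub_ne_zero.mpr fun h => ?_
    rw [Real.rpow_def_of_pos hr0] at h
    have hme : Real.log p.1 * hA.eigenvalues j = 0 := by
      have := congrArg Real.log h.symm
      rwa [Real.log_exp, Real.log_one] at this
    rcases mul_eq_zero.mp hme with h' | h'
    · exact absurd h' (ne_of_lt (Real.log_neg hr0 hr1))
    · exact hev p.2 hν j h'
  have hG_an : AnalyticAt ℝ G p :=
    (hdet1.mul (analyticAt_rexp.comp (htr1.mul hlog))).div hden_an hden_ne
  exact hG_an.congr (Filter.eventuallyEq_of_mem (hSopen.mem_nhds ⟨hr0, hr1, hν⟩) heq)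
end

section
/- Let m ≥ 2 and n ≥ 1 be integers and let ν ↦ A_ν be a linear Hermitian family of 2n×2n matrices such that A_ν is invertible for every ν ∈ ℝ^m with |ν| = 1. Then for every ν ∈ ℝ^m, det(A_ν) is a real number and |det(A_ν)| = (−1)^n · det(A_ν). -/
open Matrix Finset Module

namespace Stmt12

variable {N : ℕ}

/-- `M *ᵥ x` as an element of Euclidean space. -/
noncomputable def mulVecE (M : Matrix (Fin N) (Fin N) ℂ) (x : EuclideanSpace ℂ (Fin N)) :
    EuclideanSpace ℂ (Fin N) :=
  (WithLp.equiv 2 _).symm (M *ᵥ (WithLp.equiv 2 _ x))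

/-- The (real) quadratic form of a matrix. -/
noncomputable def qf (M : Matrix (Fin N) (Fin N) ℂ) (x : EuclideanSpace ℂ (Fin N)) : ℝ :=
  Complex.re (inner (𝕜 := ℂ) x (mulVecE M x))

lemma repr_mulVecE {M : Matrix (Fin N) (Fin N) ℂ} (hM : M.IsHermitian)
    (x : EuclideanSpace ℂ (Fin N)) (i : Fin N) :
    hM.eigenvectorBasis.repr (mulVecE M x) i
      = (hM.eigenvalues i : ℂ) * hM.eigenvectorBasis.repr x i := by
  rw [OrthonormalBasis.repr_apply_apply, OrthonormalBasis.repr_apply_apply,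
    EuclideanSpace.inner_eq_star_dotProduct, EuclideanSpace.inner_eq_star_dotProduct]
  have h1 : (mulVecE M x).ofLp = M *ᵥ x.ofLp := by
    rfl
  rw [h1, dotProduct_comm, Matrix.dotProduct_mulVec]
  have h2 : star (hM.eigenvectorBasis i).ofLp ᵥ* M
      = (hM.eigenvalues i : ℂ) • star (hM.eigenvectorBasis i).ofLp := by
    have h3 : star (Mᴴ *ᵥ (hM.eigenvectorBasis i).ofLp)
        = star (hM.eigenvectorBasis i).ofLp ᵥ* M := by
      rw [Matrix.star_mulVec, Matrix.conjTranspose_conjTranspose]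
    rw [← h3, hM.eq]
    have h4 : M *ᵥ (hM.eigenvectorBasis i).ofLp
        = hM.eigenvalues i • (hM.eigenvectorBasis i).ofLp := by
      exact hM.mulVec_eigenvectorBasis i
    rw [h4, star_smul]
    ext j
    simp [Complex.real_smul]
  rw [h2, smul_dotProduct, dotProduct_comm x.ofLp]
  simp [Complex.real_smul, smul_eq_mul]

end Stmt12

namespace Stmt12

lemma qf_eq_sum {N : ℕ} {M : Matrix (Fin N) (Fin N) ℂ} (hM : M.IsHermitian)
    (x : EuclideanSpace ℂ (Fin N)) :
    qf M x = ∑ i, hM.eigenvalues i * ‖hM.eigenvectorBasis.repr x i‖ ^ 2 := by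
  have h := hM.eigenvectorBasis.repr.inner_map_map x (mulVecE M x)
  rw [qf, ← h, PiLp.inner_apply]
  have : ∀ i, (inner (𝕜 := ℂ) (hM.eigenvectorBasis.repr x i)
      (hM.eigenvectorBasis.repr (mulVecE M x) i))
      = ((hM.eigenvalues i * ‖hM.eigenvectorBasis.repr x i‖ ^ 2 : ℝ) : ℂ) := by
    intro i
    rw [RCLike.inner_apply, repr_mulVecE hM x i]
    set c := hM.eigenvectorBasis.repr x i
    rw [show (hM.eigenvalues i : ℂ) * c * (starRingEnd ℂ) c
        = (hM.eigenvalues i : ℂ) * (c * (starRingEnd ℂ) c) from by ring,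
      Complex.mul_conj, Complex.normSq_eq_norm_sq]
    push_cast
    ring
  rw [Finset.sum_congr rfl fun i _ => this i]
  rw [← Complex.ofReal_sum]
  exact Complex.ofReal_re _

end Stmt12

namespace Stmt12

variable {N : ℕ} {M : Matrix (Fin N) (Fin N) ℂ}


lemma norm_sq_eq_sum_repr (hM : M.IsHermitian) (x : EuclideanSpace ℂ (Fin N)) :
    ‖x‖ ^ 2 = ∑ i, ‖hM.eigenvectorBasis.repr x i‖ ^ 2 := by
  rw [← hM.eigenvectorBasis.repr.norm_map x, EuclideanSpace.norm_eq,
    Real.sq_sqrt (Finset.sum_nonneg fun i _ => sq_nonneg _)]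

lemma repr_eq_zero_of_mem_span (hM : M.IsHermitian) (S : Finset (Fin N))
    {x : EuclideanSpace ℂ (Fin N)}
    (hx : x ∈ Submodule.span ℂ (hM.eigenvectorBasis '' (S : Set (Fin N))))
    {i : Fin N} (hi : i ∉ S) : hM.eigenvectorBasis.repr x i = 0 := by
  induction hx using Submodule.span_induction with
  | mem y hy =>
      obtain ⟨j, hj, rfl⟩ := hy
      rw [OrthonormalBasis.repr_self]
      have : i ≠ j := fun h => hi (h ▸ hj)
      simp [EuclideanSpace.single, this]
  | zero => simp
  | add y z _ _ hy hz => rw [map_add]; simp [hy, hz]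
  | smul c y _ hy => rw [_root_.map_smul]; simp [hy]

lemma qf_le_on_span (hM : M.IsHermitian) (S : Finset (Fin N)) (c : ℝ)
    (hc : ∀ i ∈ S, hM.eigenvalues i ≤ c) {x : EuclideanSpace ℂ (Fin N)}
    (hx : x ∈ Submodule.span ℂ (hM.eigenvectorBasis '' (S : Set (Fin N)))) :
    qf M x ≤ c * ‖x‖ ^ 2 := by
  rw [qf_eq_sum hM, norm_sq_eq_sum_repr hM, Finset.mul_sum]
  refine Finset.sum_le_sum fun i _ => ?_
  by_cases hi : i ∈ S
  · exact mul_le_mul_of_nonneg_right (hc i hi) (sq_nonneg _)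
  · rw [repr_eq_zero_of_mem_span hM S hx hi]; simp

lemma mul_le_qf_on_span (hM : M.IsHermitian) (S : Finset (Fin N)) (c : ℝ)
    (hc : ∀ i ∈ S, c ≤ hM.eigenvalues i) {x : EuclideanSpace ℂ (Fin N)}
    (hx : x ∈ Submodule.span ℂ (hM.eigenvectorBasis '' (S : Set (Fin N)))) :
    c * ‖x‖ ^ 2 ≤ qf M x := by
  rw [qf_eq_sum hM, norm_sq_eq_sum_repr hM, Finset.mul_sum]
  refine Finset.sum_le_sum fun i _ => ?_
  by_cases hi : i ∈ S
  · exact mul_le_mul_of_nonneg_right (hc i hi) (sq_nonneg _)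
  · rw [repr_eq_zero_of_mem_span hM S hx hi]; simp

lemma finrank_span_basis (hM : M.IsHermitian) (S : Finset (Fin N)) :
    finrank ℂ (Submodule.span ℂ (hM.eigenvectorBasis '' (S : Set (Fin N)))) = S.card := by
  have hli : LinearIndependent ℂ (fun i : (S : Set (Fin N)) => hM.eigenvectorBasis i) :=
    (hM.eigenvectorBasis.orthonormal.linearIndependent).comp _ Subtype.val_injective
  have : hM.eigenvectorBasis '' (S : Set (Fin N))
      = Set.range (fun i : (S : Set (Fin N)) => hM.eigenvectorBasis i) := by
    rw [Set.image_eq_range]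
  rw [this, finrank_span_eq_card hli]
  simp

end Stmt12

namespace Stmt12

variable {N : ℕ} {M : Matrix (Fin N) (Fin N) ℂ}

/-- Number of negative eigenvalues. -/
noncomputable def negCount (hM : M.IsHermitian) : ℕ :=
  (Finset.univ.filter fun i => hM.eigenvalues i < 0).card

/-- Number of positive eigenvalues. -/
noncomputable def posCount (hM : M.IsHermitian) : ℕ :=
  (Finset.univ.filter fun i => 0 < hM.eigenvalues i).card

lemma finrank_le_negCount (hM : M.IsHermitian) (W : Submodule ℂ (EuclideanSpace ℂ (Fin N)))
    (hW : ∀ x ∈ W, x ≠ 0 → qf M x < 0) : finrank ℂ W ≤ negCount hM := by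
  classical
  set S : Finset (Fin N) := Finset.univ.filter fun i => ¬ hM.eigenvalues i < 0 with hS
  set U := Submodule.span ℂ (hM.eigenvectorBasis '' (S : Set (Fin N))) with hU
  have hdis : Disjoint W U := by
    rw [Submodule.disjoint_def]
    intro x hxW hxU
    by_contra hx
    have h1 : qf M x < 0 := hW x hxW hx
    have h2 : (0 : ℝ) ≤ qf M x := by
      have := mul_le_qf_on_span hM S 0 (fun i hi => by
        simp only [hS, Finset.mem_filter] at hi; exact not_lt.1 hi.2) hxU
      simpa using this
    exact absurd h1 (not_lt.2 h2)
  have hle := Submodule.finrank_add_finrank_le_of_disjoint hdis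
  rw [finrank_span_basis hM S] at hle
  rw [finrank_euclideanSpace_fin] at hle
  have hcard : (Finset.univ.filter fun i => hM.eigenvalues i < 0).card + S.card = N := by
    rw [hS, Finset.card_filter_add_card_filter_not]
    simp
  unfold negCount
  omega

lemma finrank_le_posCount (hM : M.IsHermitian) (W : Submodule ℂ (EuclideanSpace ℂ (Fin N)))
    (hW : ∀ x ∈ W, x ≠ 0 → 0 < qf M x) : finrank ℂ W ≤ posCount hM := by
  classical
  set S : Finset (Fin N) := Finset.univ.filter fun i => ¬ 0 < hM.eigenvalues i with hS
  set U := Submodule.span ℂ (hM.eigenvectorBasis '' (S : Set (Fin N))) with hU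
  have hdis : Disjoint W U := by
    rw [Submodule.disjoint_def]
    intro x hxW hxU
    by_contra hx
    have h1 : 0 < qf M x := hW x hxW hx
    have h2 : qf M x ≤ 0 := by
      have := qf_le_on_span hM S 0 (fun i hi => by
        simp only [hS, Finset.mem_filter] at hi; exact not_lt.1 hi.2) hxU
      simpa using this
    exact absurd h1 (not_lt.2 h2)
  have hle := Submodule.finrank_add_finrank_le_of_disjoint hdis
  rw [finrank_span_basis hM S] at hle
  rw [finrank_euclideanSpace_fin] at hle
  have hcard : (Finset.univ.filter fun i => 0 < hM.eigenvalues i).card + S.card = N := by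
    rw [hS, Finset.card_filter_add_card_filter_not]
    simp
  unfold posCount
  omega

end Stmt12

namespace Stmt12

variable {N : ℕ}

lemma coord_norm_le (x : EuclideanSpace ℂ (Fin N)) (i : Fin N) : ‖x i‖ ≤ ‖x‖ := by
  rw [EuclideanSpace.norm_eq]
  have h1 : ‖x i‖ ^ 2 ≤ ∑ j, ‖x j‖ ^ 2 :=
    Finset.single_le_sum (f := fun j => ‖x j‖ ^ 2) (fun j _ => sq_nonneg _) (Finset.mem_univ i)
  calc ‖x i‖ = Real.sqrt (‖x i‖ ^ 2) := by rw [Real.sqrt_sq (norm_nonneg _)]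
    _ ≤ _ := Real.sqrt_le_sqrt h1

lemma abs_qf_le (E : Matrix (Fin N) (Fin N) ℂ) (x : EuclideanSpace ℂ (Fin N)) :
    |qf E x| ≤ (∑ i, ∑ j, ‖E i j‖) * ‖x‖ ^ 2 := by
  have h1 : |qf E x| ≤ ‖inner (𝕜 := ℂ) x (mulVecE E x)‖ :=
    Complex.abs_re_le_norm _
  refine h1.trans ?_
  rw [EuclideanSpace.inner_eq_star_dotProduct]
  have h2 : (mulVecE E x).ofLp = E *ᵥ x.ofLp := rfl
  rw [h2, dotProduct]
  refine (norm_sum_le _ _).trans ?_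
  have key : ∀ i, ‖(E *ᵥ x.ofLp) i * star x.ofLp i‖
      ≤ ∑ j, ‖E i j‖ * (‖x‖ * ‖x‖) := by
    intro i
    rw [norm_mul]
    have ha : ‖star x.ofLp i‖ ≤ ‖x‖ := by
      have : star x.ofLp i = (starRingEnd ℂ) (x i) := rfl
      rw [this, Complex.norm_conj]
      exact coord_norm_le x i
    have hb : ‖(E *ᵥ x.ofLp) i‖ ≤ ∑ j, ‖E i j‖ * ‖x‖ := by
      rw [Matrix.mulVec, dotProduct]
      refine (norm_sum_le _ _).trans (Finset.sum_le_sum fun j _ => ?_)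
      rw [norm_mul]
      refine mul_le_mul_of_nonneg_left ?_ (norm_nonneg _)
      exact coord_norm_le x j
    calc ‖(E *ᵥ x.ofLp) i‖ * ‖star x.ofLp i‖
        ≤ (∑ j, ‖E i j‖ * ‖x‖) * ‖x‖ :=
          mul_le_mul hb ha (norm_nonneg _) (Finset.sum_nonneg fun j _ => by positivity)
      _ = ∑ j, ‖E i j‖ * (‖x‖ * ‖x‖) := by
          rw [Finset.sum_mul]; exact Finset.sum_congr rfl fun j _ => by ring
  refine (Finset.sum_le_sum fun i _ => key i).trans ?_
  rw [Finset.sum_mul, sq]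
  exact le_of_eq (Finset.sum_congr rfl fun i _ => by rw [Finset.sum_mul])

end Stmt12

namespace Stmt12

variable {N : ℕ}

lemma qf_sub (M M' : Matrix (Fin N) (Fin N) ℂ) (x : EuclideanSpace ℂ (Fin N)) :
    qf M' x - qf M x = qf (M' - M) x := by
  have h : mulVecE (M' - M) x = mulVecE M' x - mulVecE M x := by
    simp only [mulVecE, Matrix.sub_mulVec]
    rfl
  rw [show qf (M' - M) x = Complex.re (inner (𝕜 := ℂ) x (mulVecE (M' - M) x)) from rfl,
    h, inner_sub_right]
  simp [qf]

lemma negCount_le_negCount {M M' : Matrix (Fin N) (Fin N) ℂ}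
    (hM : M.IsHermitian) (hM' : M'.IsHermitian) (δ : ℝ)
    (hδ : ∀ i, hM.eigenvalues i < 0 → hM.eigenvalues i ≤ -δ)
    (hq : ∀ x, |qf (M' - M) x| ≤ c * ‖x‖ ^ 2) (hcδ : c < δ) :
    negCount hM ≤ negCount hM' := by
  classical
  set S : Finset (Fin N) := Finset.univ.filter fun i => hM.eigenvalues i < 0 with hS
  set W := Submodule.span ℂ (hM.eigenvectorBasis '' (S : Set (Fin N))) with hW
  have hfr : finrank ℂ W = negCount hM := finrank_span_basis hM S
  rw [← hfr]
  refine finrank_le_negCount hM' W fun x hx hx0 => ?_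
  have h1 : qf M x ≤ -δ * ‖x‖ ^ 2 :=
    qf_le_on_span hM S (-δ) (fun i hi => hδ i (by simpa [hS] using hi)) hx
  have h2 : qf M' x ≤ qf M x + c * ‖x‖ ^ 2 := by
    have := (abs_le.1 (hq x)).2
    rw [← qf_sub M M' x] at this
    linarith
  have hxn : 0 < ‖x‖ ^ 2 := by
    have := norm_pos_iff.2 hx0
    positivity
  nlinarith

lemma posCount_le_posCount {M M' : Matrix (Fin N) (Fin N) ℂ}
    (hM : M.IsHermitian) (hM' : M'.IsHermitian) (δ : ℝ)
    (hδ : ∀ i, 0 < hM.eigenvalues i → δ ≤ hM.eigenvalues i)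
    (hq : ∀ x, |qf (M' - M) x| ≤ c * ‖x‖ ^ 2) (hcδ : c < δ) :
    posCount hM ≤ posCount hM' := by
  classical
  set S : Finset (Fin N) := Finset.univ.filter fun i => 0 < hM.eigenvalues i with hS
  set W := Submodule.span ℂ (hM.eigenvectorBasis '' (S : Set (Fin N))) with hW
  have hfr : finrank ℂ W = posCount hM := finrank_span_basis hM S
  rw [← hfr]
  refine finrank_le_posCount hM' W fun x hx hx0 => ?_
  have h1 : δ * ‖x‖ ^ 2 ≤ qf M x :=
    mul_le_qf_on_span hM S δ (fun i hi => hδ i (by simpa [hS] using hi)) hx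
  have h2 : qf M x - c * ‖x‖ ^ 2 ≤ qf M' x := by
    have := (abs_le.1 (hq x)).1
    rw [← qf_sub M M' x] at this
    linarith
  have hxn : 0 < ‖x‖ ^ 2 := by
    have := norm_pos_iff.2 hx0
    positivity
  nlinarith

lemma eigenvalues_ne_zero {M : Matrix (Fin N) (Fin N) ℂ} (hM : M.IsHermitian)
    (hu : IsUnit M) (i : Fin N) : hM.eigenvalues i ≠ 0 := by
  have hdet : M.det ≠ 0 := ((Matrix.isUnit_iff_isUnit_det M).1 hu).ne_zero
  intro h
  have hprod := hM.det_eq_prod_eigenvalues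
  rw [hprod] at hdet
  exact hdet (Finset.prod_eq_zero (Finset.mem_univ i) (by rw [h]; norm_num))

lemma counts_sum {M : Matrix (Fin N) (Fin N) ℂ} (hM : M.IsHermitian) (hu : IsUnit M) :
    negCount hM + posCount hM = N := by
  classical
  have h : ∀ i : Fin N, 0 < hM.eigenvalues i ↔ ¬ hM.eigenvalues i < 0 := fun i =>
    ⟨fun h1 => not_lt.2 h1.le, fun h2 => lt_of_le_of_ne (not_lt.1 h2)
      (Ne.symm (eigenvalues_ne_zero hM hu i))⟩
  rw [negCount, posCount]
  rw [Finset.filter_congr (fun i _ => h i)]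
  rw [Finset.card_filter_add_card_filter_not]
  simp

end Stmt12

namespace Stmt12

variable {N : ℕ} {M : Matrix (Fin N) (Fin N) ℂ}

lemma qf_zero (x : EuclideanSpace ℂ (Fin N)) : qf 0 x = 0 := by
  have h : mulVecE (0 : Matrix (Fin N) (Fin N) ℂ) x = 0 := by
    simp only [mulVecE, Matrix.zero_mulVec]
    rfl
  rw [qf, h, inner_zero_right]
  rfl

lemma qf_neg (M : Matrix (Fin N) (Fin N) ℂ) (x : EuclideanSpace ℂ (Fin N)) :
    qf (-M) x = - qf M x := by
  have := qf_sub M 0 x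
  rw [zero_sub, qf_zero] at this
  linarith

lemma exists_repr_ne_zero (hM : M.IsHermitian) {x : EuclideanSpace ℂ (Fin N)} (hx : x ≠ 0) :
    ∃ i, hM.eigenvectorBasis.repr x i ≠ 0 := by
  by_contra h
  push_neg at h
  apply hx
  have : hM.eigenvectorBasis.repr x = 0 := by
    ext i
    exact h i
  exact (hM.eigenvectorBasis.repr.map_eq_zero_iff).1 this

lemma qf_pos_on_span (hM : M.IsHermitian) (S : Finset (Fin N))
    (hS : ∀ i ∈ S, 0 < hM.eigenvalues i) {x : EuclideanSpace ℂ (Fin N)}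
    (hx : x ∈ Submodule.span ℂ (hM.eigenvectorBasis '' (S : Set (Fin N)))) (hx0 : x ≠ 0) :
    0 < qf M x := by
  rw [qf_eq_sum hM]
  obtain ⟨i, hi⟩ := exists_repr_ne_zero hM hx0
  have hiS : i ∈ S := by
    by_contra hiS
    exact hi (repr_eq_zero_of_mem_span hM S hx hiS)
  refine Finset.sum_pos' (fun j _ => ?_) ⟨i, Finset.mem_univ i, ?_⟩
  · by_cases hj : j ∈ S
    · exact mul_nonneg (hS j hj).le (sq_nonneg _)
    · rw [repr_eq_zero_of_mem_span hM S hx hj]; simp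
  · have : 0 < ‖hM.eigenvectorBasis.repr x i‖ ^ 2 := by
      have := norm_pos_iff.2 hi
      positivity
    exact mul_pos (hS i hiS) this

lemma qf_neg_on_span (hM : M.IsHermitian) (S : Finset (Fin N))
    (hS : ∀ i ∈ S, hM.eigenvalues i < 0) {x : EuclideanSpace ℂ (Fin N)}
    (hx : x ∈ Submodule.span ℂ (hM.eigenvectorBasis '' (S : Set (Fin N)))) (hx0 : x ≠ 0) :
    qf M x < 0 := by
  rw [qf_eq_sum hM]
  obtain ⟨i, hi⟩ := exists_repr_ne_zero hM hx0
  have hiS : i ∈ S := by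
    by_contra hiS
    exact hi (repr_eq_zero_of_mem_span hM S hx hiS)
  have : ∑ j, hM.eigenvalues j * ‖hM.eigenvectorBasis.repr x j‖ ^ 2
      < ∑ j : Fin N, (0 : ℝ) := by
    refine Finset.sum_lt_sum (fun j _ => ?_) ⟨i, Finset.mem_univ i, ?_⟩
    · by_cases hj : j ∈ S
      · exact mul_nonpos_of_nonpos_of_nonneg (hS j hj).le (sq_nonneg _)
      · rw [repr_eq_zero_of_mem_span hM S hx hj]; simp
    · have h2 : 0 < ‖hM.eigenvectorBasis.repr x i‖ ^ 2 := by
        have := norm_pos_iff.2 hi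
        positivity
      exact mul_neg_of_neg_of_pos (hS i hiS) h2
  simpa using this

lemma negCount_neg_eq (hM : M.IsHermitian) (hMn : (-M).IsHermitian) :
    negCount hMn = posCount hM := by
  classical
  refine le_antisymm ?_ ?_
  · set S : Finset (Fin N) := Finset.univ.filter fun i => hMn.eigenvalues i < 0 with hS
    have hfr : finrank ℂ (Submodule.span ℂ (hMn.eigenvectorBasis '' (S : Set (Fin N))))
        = negCount hMn := finrank_span_basis hMn S
    rw [← hfr]
    refine finrank_le_posCount hM _ fun x hx hx0 => ?_
    have h1 : qf (-M) x < 0 :=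
      qf_neg_on_span hMn S (fun i hi => by simpa [hS] using hi) hx hx0
    rw [qf_neg] at h1
    linarith
  · set S : Finset (Fin N) := Finset.univ.filter fun i => 0 < hM.eigenvalues i with hS
    have hfr : finrank ℂ (Submodule.span ℂ (hM.eigenvectorBasis '' (S : Set (Fin N))))
        = posCount hM := finrank_span_basis hM S
    rw [← hfr]
    refine finrank_le_negCount hMn _ fun x hx hx0 => ?_
    have h1 : 0 < qf M x :=
      qf_pos_on_span hM S (fun i hi => by simpa [hS] using hi) hx hx0
    rw [qf_neg]
    linarith

lemma det_sign (hM : M.IsHermitian) (k : ℕ) (hk : negCount hM = k) :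
    ((‖M.det‖ : ℝ) : ℂ) = (-1 : ℂ) ^ k * M.det := by
  classical
  set t : ℝ := ∏ i, hM.eigenvalues i with ht
  have hdet : M.det = ((t : ℝ) : ℂ) := by
    rw [hM.det_eq_prod_eigenvalues, ht]
    push_cast
    rfl
  have hP : (0 : ℝ) ≤ ∏ i, |hM.eigenvalues i| := Finset.prod_nonneg fun i _ => abs_nonneg _
  have htP : t = (-1 : ℝ) ^ k * ∏ i, |hM.eigenvalues i| := by
    rw [ht]
    have h1 : ∀ i : Fin N, hM.eigenvalues i
        = (if hM.eigenvalues i < 0 then (-1 : ℝ) else 1) * |hM.eigenvalues i| := by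
      intro i
      by_cases h : hM.eigenvalues i < 0
      · rw [if_pos h, abs_of_neg h]; ring
      · rw [if_neg h, abs_of_nonneg (not_lt.1 h)]; ring
    rw [Finset.prod_congr rfl fun i _ => h1 i, Finset.prod_mul_distrib]
    congr 1
    rw [Finset.prod_ite, Finset.prod_const, Finset.prod_const, one_pow, mul_one]
    rw [← hk, negCount]
  have habs : |t| = (-1 : ℝ) ^ k * t := by
    rw [htP, abs_mul, abs_pow, abs_neg, abs_one, one_pow, one_mul,
      abs_of_nonneg hP, ← mul_assoc, ← mul_pow]
    norm_num
  rw [hdet, Complex.norm_real, Real.norm_eq_abs, habs]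
  push_cast
  ring

end Stmt12

namespace Stmt12

lemma negCount_congr {N : ℕ} {M M' : Matrix (Fin N) (Fin N) ℂ} (h : M = M')
    (hM : M.IsHermitian) (hM' : M'.IsHermitian) : negCount hM = negCount hM' := by
  subst h; rfl

lemma negCount_unit_eq (m n : ℕ) (hm : 2 ≤ m) (hn : 1 ≤ n)
    (A : EuclideanSpace ℝ (Fin m) →ₗ[ℝ] Matrix (Fin (2 * n)) (Fin (2 * n)) ℂ)
    (hHerm : ∀ ν, (A ν).IsHermitian)
    (hinv : ∀ ν : EuclideanSpace ℝ (Fin m), ‖ν‖ = 1 → IsUnit (A ν))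
    (u : EuclideanSpace ℝ (Fin m)) (hu : ‖u‖ = 1) :
    negCount (hHerm u) = n := by
  classical
  have hu0 : u ≠ 0 := fun h => by rw [h, norm_zero] at hu; norm_num at hu
  -- find a unit vector orthogonal to `u`
  have hK : finrank ℝ (ℝ ∙ u) = 1 := finrank_span_singleton hu0
  have hfin : finrank ℝ (EuclideanSpace ℝ (Fin m)) = m := finrank_euclideanSpace_fin
  have horthrank : finrank ℝ (ℝ ∙ u)ᗮ = m - 1 := by
    have := Submodule.finrank_add_finrank_orthogonal (𝕜 := ℝ) (ℝ ∙ u)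
    omega
  have hbot : (ℝ ∙ u)ᗮ ≠ ⊥ := by
    intro h
    rw [h, finrank_bot] at horthrank
    omega
  obtain ⟨v, hvK, hv0⟩ := Submodule.exists_mem_ne_zero_of_ne_bot hbot
  set w : EuclideanSpace ℝ (Fin m) := (‖v‖⁻¹ : ℝ) • v with hwdef
  have hw : ‖w‖ = 1 := norm_smul_inv_norm hv0
  have hwK : w ∈ (ℝ ∙ u)ᗮ := Submodule.smul_mem _ _ hvK
  have huw : (inner ℝ u w : ℝ) = 0 := by
    have := (Submodule.mem_orthogonal (ℝ ∙ u) w).1 hwK u (Submodule.mem_span_singleton_self u)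
    exact this
  -- the circle
  set ν : ℝ → EuclideanSpace ℝ (Fin m) :=
    fun θ => Real.cos θ • u + Real.sin θ • w with hν
  have hνnorm : ∀ θ, ‖ν θ‖ = 1 := by
    intro θ
    have hsq : ‖ν θ‖ ^ 2 = 1 := by
      rw [hν]
      simp only
      rw [norm_add_sq_real, norm_smul, norm_smul, hu, hw,
        real_inner_smul_left, real_inner_smul_right, huw]
      simp only [Real.norm_eq_abs, mul_one, mul_zero, add_zero]
      rw [sq_abs, sq_abs]
      have := Real.sin_sq_add_cos_sq θ
      linarith
    rw [← Real.sqrt_sq (norm_nonneg (ν θ)), hsq, Real.sqrt_one]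
  haveI : Nonempty (Fin (2 * n)) := ⟨⟨0, by omega⟩⟩
  set f : ℝ → ℕ := fun θ => negCount (hHerm (ν θ)) with hf
  have hloc : IsLocallyConstant f := by
    rw [IsLocallyConstant.iff_eventually_eq]
    intro θ₀
    set h0 := hHerm (ν θ₀) with hh0
    set δ : ℝ := Finset.univ.inf' Finset.univ_nonempty (fun i => |h0.eigenvalues i|) with hδ
    have hδpos : 0 < δ := by
      rw [hδ, Finset.lt_inf'_iff]
      exact fun i _ => abs_pos.2 (eigenvalues_ne_zero h0 (hinv _ (hνnorm θ₀)) i)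
    set g : ℝ → ℝ := fun θ => ∑ i, ∑ j, ‖(A (ν θ) - A (ν θ₀)) i j‖ with hg
    have hνcont : Continuous ν := by
      exact (Real.continuous_cos.smul continuous_const).add
        (Real.continuous_sin.smul continuous_const)
    have hAcont : Continuous fun θ => A (ν θ) :=
      (A.continuous_of_finiteDimensional).comp hνcont
    have hgcont : Continuous g := by
      refine continuous_finset_sum _ fun i _ => continuous_finset_sum _ fun j _ => ?_
      exact continuous_norm.comp
        ((((continuous_apply j).comp ((continuous_apply i).comp hAcont)).sub continuous_const))
    have hg0 : g θ₀ = 0 := by simp [hg]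
    have hev : ∀ᶠ θ in nhds θ₀, g θ < δ := by
      have h1 : Filter.Tendsto g (nhds θ₀) (nhds (g θ₀)) := hgcont.continuousAt
      exact h1.eventually_lt_const (by rw [hg0]; exact hδpos)
    filter_upwards [hev] with θ hθ
    have hqb : ∀ x, |qf (A (ν θ) - A (ν θ₀)) x| ≤ g θ * ‖x‖ ^ 2 := fun x => abs_qf_le _ x
    have hδneg : ∀ i, h0.eigenvalues i < 0 → h0.eigenvalues i ≤ -δ := by
      intro i hi
      have := Finset.inf'_le (f := fun i => |h0.eigenvalues i|) (Finset.mem_univ i)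
      rw [abs_of_neg hi] at this
      rw [← hδ] at this
      linarith
    have hδpos' : ∀ i, 0 < h0.eigenvalues i → δ ≤ h0.eigenvalues i := by
      intro i hi
      have := Finset.inf'_le (f := fun i => |h0.eigenvalues i|) (Finset.mem_univ i)
      rw [abs_of_pos hi] at this
      rw [← hδ] at this
      linarith
    have l1 : negCount h0 ≤ negCount (hHerm (ν θ)) :=
      negCount_le_negCount h0 (hHerm (ν θ)) δ hδneg hqb hθ
    have l2 : posCount h0 ≤ posCount (hHerm (ν θ)) :=
      posCount_le_posCount h0 (hHerm (ν θ)) δ hδpos' hqb hθ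
    have s1 := counts_sum h0 (hinv _ (hνnorm θ₀))
    have s2 := counts_sum (hHerm (ν θ)) (hinv _ (hνnorm θ))
    show negCount (hHerm (ν θ)) = negCount (hHerm (ν θ₀))
    omega
  have hconst : f 0 = f Real.pi := hloc.apply_eq_of_preconnectedSpace 0 Real.pi
  have hν0 : ν 0 = u := by simp [hν]
  have hνπ : ν Real.pi = -u := by simp [hν]
  have hMπ : A (ν Real.pi) = -(A u) := by rw [hνπ, map_neg]
  have hMn : (-(A u)).IsHermitian := hMπ ▸ hHerm (ν Real.pi)
  have e1 : f 0 = negCount (hHerm u) := negCount_congr (by rw [hν0]) _ _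
  have e2 : f Real.pi = negCount hMn := negCount_congr hMπ _ _
  have e3 : negCount hMn = posCount (hHerm u) := negCount_neg_eq (hHerm u) hMn
  have s := counts_sum (hHerm u) (hinv u hu)
  omega

end Stmt12


/-- (First bullet of Lemma 11.1 of the paper.)  Let `m ≥ 2`, `n ≥ 1` and let
`ν ↦ A ν` be a linear Hermitian family of `2n × 2n` matrices with `A ν` invertible for every
unit vector `ν`.  Then for every `ν ∈ ℝᵐ`, `det (A ν)` is real and
`|det (A ν)| = (−1)ⁿ · det (A ν)`. -/
theorem statement_12 (m n : ℕ) (hm : 2 ≤ m) (hn : 1 ≤ n)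
    (A : EuclideanSpace ℝ (Fin m) →ₗ[ℝ] Matrix (Fin (2 * n)) (Fin (2 * n)) ℂ)
    (hHerm : ∀ ν, (A ν).IsHermitian)
    (hinv : ∀ ν : EuclideanSpace ℝ (Fin m), ‖ν‖ = 1 → IsUnit (A ν)) :
    ∀ ν : EuclideanSpace ℝ (Fin m),
      (∃ d : ℝ, (A ν).det = (d : ℂ)) ∧
      ((‖(A ν).det‖ : ℝ) : ℂ) = (-1 : ℂ) ^ n * (A ν).det := by
  intro ν
  by_cases hν0 : ν = 0
  · haveI : Nonempty (Fin (2 * n)) := ⟨⟨0, by omega⟩⟩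
    have h0 : (A ν).det = 0 := by
      rw [hν0, map_zero, Matrix.det_zero]
    constructor
    · exact ⟨0, by rw [h0]; norm_num⟩
    · rw [h0]
      simp
  · set r : ℝ := ‖ν‖ with hr_def
    have hr : 0 < r := norm_pos_iff.2 hν0
    set u : EuclideanSpace ℝ (Fin m) := (r⁻¹ : ℝ) • ν with hu_def
    have hu : ‖u‖ = 1 := norm_smul_inv_norm hν0
    have hru : ν = r • u := by
      rw [hu_def, smul_inv_smul₀ hr.ne']
    have hkey := Stmt12.det_sign (hHerm u) n
      (Stmt12.negCount_unit_eq m n hm hn A hHerm hinv u hu)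
    have hAν : A ν = (r : ℂ) • A u := by
      rw [hru, _root_.map_smul]
      ext i j
      simp [Complex.real_smul]
    have hdet : (A ν).det = (r : ℂ) ^ (2 * n) * (A u).det := by
      rw [hAν, Matrix.det_smul, Fintype.card_fin]
    have h2 : ((‖(A ν).det‖ : ℝ) : ℂ) = (-1 : ℂ) ^ n * (A ν).det := by
      rw [hdet, norm_mul, norm_pow, Complex.norm_real, Real.norm_eq_abs, abs_of_pos hr]
      push_cast
      rw [hkey]
      ring
    refine ⟨⟨(-1 : ℝ) ^ n * ‖(A ν).det‖, ?_⟩, h2⟩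
    push_cast
    rw [h2, ← mul_assoc, ← mul_pow]
    norm_num
end

section
/- For all real numbers a > 0 and b > 0: ∫_1^{∞} ∫_{−1}^{1} (a·s − i·b·x)^{−4} dx ds = 2 / (3·(a² + b²)²). -/
open MeasureTheory

/-- nonvanishing: positive real part -/
lemma aux_ne (r : ℝ) (hr : 0 < r) (c : ℂ) (hc : c.re = 0) : (r : ℂ) + c ≠ 0 := by
  intro h
  have := congrArg Complex.re h
  simp [Complex.add_re, Complex.ofReal_re, hc] at this
  exact hr.ne' this

lemma aux_norm_le (r : ℝ) (hr : 0 < r) (c : ℂ) (hc : c.re = 0) (n : ℕ) :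
    ‖(((r : ℂ) + c) ^ n)⁻¹‖ ≤ (r ^ n)⁻¹ := by
  rw [norm_inv, norm_pow]
  have h1 : r ≤ ‖(r : ℂ) + c‖ := by
    have h := Complex.abs_re_le_norm ((r : ℂ) + c)
    rw [Complex.add_re, Complex.ofReal_re, hc, add_zero, abs_of_pos hr] at h
    exact h
  exact inv_anti₀ (pow_pos hr n) (pow_le_pow_left₀ hr.le h1 n)

lemma aux_intg (a : ℝ) (ha : 0 < a) (c : ℂ) (hc : c.re = 0) :
    IntegrableOn (fun s : ℝ => ((((a * s : ℝ) : ℂ) + c) ^ 3)⁻¹)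
      (Set.Ioi (1 : ℝ)) volume := by
  have hgi : IntegrableOn (fun s : ℝ => a⁻¹ ^ 3 * s ^ (-3 : ℝ)) (Set.Ioi (1 : ℝ)) volume :=
    (integrableOn_Ioi_rpow_of_lt (by norm_num) one_pos).const_mul _
  refine Integrable.mono' hgi ?_ ?_
  · exact ((Continuous.pow (by continuity) 3).measurable).inv.aestronglyMeasurable
  · filter_upwards [MeasureTheory.ae_restrict_mem measurableSet_Ioi] with s hs
    have hs1 : (1 : ℝ) < s := hs
    have hs0 : (0 : ℝ) < s := lt_trans one_pos hs1
    have has : 0 < a * s := mul_pos ha hs0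
    have h := aux_norm_le (a * s) has c hc 3
    have hp : s ^ (-3 : ℝ) = (s ^ 3)⁻¹ := by
      rw [show (-3 : ℝ) = ((-3 : ℤ) : ℝ) by norm_num, Real.rpow_intCast]
      simp [zpow_ofNat]
    calc ‖((((a * s : ℝ) : ℂ) + c) ^ 3)⁻¹‖ ≤ ((a * s) ^ 3)⁻¹ := h
      _ = a⁻¹ ^ 3 * s ^ (-3 : ℝ) := by rw [hp, mul_pow, mul_inv, inv_pow]

lemma aux_outer (a : ℝ) (ha : 0 < a) (c : ℂ) (hc : c.re = 0) :
    ∫ s in Set.Ioi (1 : ℝ), ((((a * s : ℝ) : ℂ) + c) ^ 3)⁻¹ =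
      (2 * (a : ℂ))⁻¹ * (((a : ℂ) + c) ^ 2)⁻¹ := by
  have ha' : (a : ℂ) ≠ 0 := Complex.ofReal_ne_zero.mpr ha.ne'
  set f : ℝ → ℂ := fun s => -(2 * (a : ℂ))⁻¹ * ((((a : ℂ) * s + c) ^ 2)⁻¹) with hf
  have hne : ∀ s : ℝ, 0 < s → ((a : ℂ)) * s + c ≠ 0 := by
    intro s hs
    have := aux_ne (a * s) (mul_pos ha hs) c hc
    simpa [Complex.ofReal_mul] using this
  have hderiv : ∀ s : ℝ, 0 < s →
      HasDerivAt f (((((a * s : ℝ) : ℂ) + c) ^ 3)⁻¹) s := by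
    intro s hs0
    have h1 : HasDerivAt (fun w : ℂ => (a : ℂ) * w + c) (a : ℂ) (s : ℂ) := by
      simpa using ((hasDerivAt_id ((s : ℝ) : ℂ)).const_mul (a : ℂ)).add_const c
    have h2 := (hasDerivAt_zpow (-2) ((a : ℂ) * s + c) (Or.inl (hne s hs0))).comp
      ((s : ℝ) : ℂ) h1
    have h2' : HasDerivAt (fun w : ℂ => ((((a : ℂ)) * w + c) ^ 2)⁻¹)
        ((-2 : ℂ) * (((a : ℂ) * s + c) ^ 3)⁻¹ * a) (s : ℂ) := by
      have hfun : (fun w : ℂ => ((((a : ℂ)) * w + c) ^ 2)⁻¹) =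
          (fun x : ℂ => x ^ (-2 : ℤ)) ∘ (fun w : ℂ => (a : ℂ) * w + c) := by
        funext w; simp [Function.comp, zpow_ofNat]
      rw [hfun]
      refine h2.congr_deriv ?_
      norm_num [zpow_ofNat]
    have h3 := (h2'.const_mul (-(2 * (a : ℂ))⁻¹)).comp_ofReal
    have : (-(2 * (a : ℂ))⁻¹ * ((-2 : ℂ) * (((a : ℂ) * s + c) ^ 3)⁻¹ * a)) =
        ((((a * s : ℝ) : ℂ) + c) ^ 3)⁻¹ := by
      push_cast
      field_simp
    rw [this] at h3
    exact h3
  have hcont : ContinuousWithinAt f (Set.Ici (1 : ℝ)) 1 := by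
    have h5 : (((a : ℂ) * (1 : ℝ) + c) ^ 2) ≠ 0 :=
      pow_ne_zero _ (hne 1 one_pos)
    have h4 : ContinuousAt (fun s : ℝ => (((a : ℂ) * s + c) ^ 2)) 1 :=
      Continuous.continuousAt (by continuity)
    have h6 : ContinuousAt f 1 := ContinuousAt.mul continuousAt_const (h4.inv₀ h5)
    exact h6.continuousWithinAt
  have htend : Filter.Tendsto f Filter.atTop (nhds 0) := by
    have h0 : Filter.Tendsto (fun s : ℝ => ((((a : ℂ) * s + c) ^ 2)⁻¹))
        Filter.atTop (nhds 0) := by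
      apply squeeze_zero_norm' (a := fun s : ℝ => ((a * s) ^ 2)⁻¹)
      · filter_upwards [Filter.eventually_gt_atTop (0 : ℝ)] with s hs
        have := aux_norm_le (a * s) (mul_pos ha hs) c hc 2
        simpa [Complex.ofReal_mul] using this
      · apply Filter.Tendsto.inv_tendsto_atTop
        exact (Filter.tendsto_pow_atTop (two_ne_zero)).comp
          (Filter.Tendsto.const_mul_atTop ha Filter.tendsto_id)
    have := h0.const_mul (-(2 * (a : ℂ))⁻¹)
    rw [mul_zero] at this
    exact this
  have key := MeasureTheory.integral_Ioi_of_hasDerivAt_of_tendsto hcont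
    (fun s hs => hderiv s (lt_trans one_pos hs))
    (aux_intg a ha c hc) htend
  rw [key]
  simp only [hf]
  push_cast
  rw [mul_one]
  ring

lemma aux_inner (a b : ℝ) (ha : 0 < a) (hb : 0 < b) (s : ℝ) (hs : 1 ≤ s) :
    (∫ x in (-1 : ℝ)..1,
        (((a * s : ℝ) - Complex.I * ((b * x : ℝ) : ℂ)) ^ 4)⁻¹) =
      (3 * Complex.I * (b : ℂ))⁻¹ *
          ((((a * s : ℝ) : ℂ) + -(Complex.I * (b : ℂ))) ^ 3)⁻¹ -
        (3 * Complex.I * (b : ℂ))⁻¹ *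
          ((((a * s : ℝ) : ℂ) + Complex.I * (b : ℂ)) ^ 3)⁻¹ := by
  have hb' : (b : ℂ) ≠ 0 := Complex.ofReal_ne_zero.mpr hb.ne'
  have has : 0 < a * s := mul_pos ha (lt_of_lt_of_le one_pos hs)
  have hvne : ∀ x : ℝ, ((a * s : ℝ) : ℂ) - Complex.I * ((b * x : ℝ) : ℂ) ≠ 0 := by
    intro x
    have := aux_ne (a * s) has (-(Complex.I * ((b * x : ℝ) : ℂ))) (by simp)
    simpa [sub_eq_add_neg] using this
  set F : ℝ → ℂ := fun x =>
    (3 * Complex.I * (b : ℂ))⁻¹ *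
      ((((a * s : ℝ) : ℂ) - Complex.I * ((b * x : ℝ) : ℂ)) ^ 3)⁻¹ with hF
  have hd : ∀ x ∈ Set.uIcc (-1 : ℝ) 1,
      HasDerivAt F ((((a * s : ℝ) - Complex.I * ((b * x : ℝ) : ℂ)) ^ 4)⁻¹) x := by
    intro x _
    have h1 : HasDerivAt
        (fun w : ℂ => (((a * s : ℝ) : ℂ)) + (-(Complex.I * (b : ℂ))) * w)
        (-(Complex.I * (b : ℂ))) ((x : ℝ) : ℂ) := by
      simpa using (((hasDerivAt_id ((x : ℝ) : ℂ)).const_mul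
        (-(Complex.I * (b : ℂ)))).const_add (((a * s : ℝ) : ℂ)))
    have heq : (((a * s : ℝ) : ℂ)) + (-(Complex.I * (b : ℂ))) * ((x : ℝ) : ℂ) =
        ((a * s : ℝ) : ℂ) - Complex.I * ((b * x : ℝ) : ℂ) := by push_cast; ring
    have hvne' : (((a * s : ℝ) : ℂ)) + (-(Complex.I * (b : ℂ))) * ((x : ℝ) : ℂ) ≠ 0 := by
      rw [heq]; exact hvne x
    have h2 := (hasDerivAt_zpow (-3)
      ((((a * s : ℝ) : ℂ)) + (-(Complex.I * (b : ℂ))) * ((x : ℝ) : ℂ))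
      (Or.inl hvne')).comp ((x : ℝ) : ℂ) h1
    have h3 := (h2.const_mul ((3 * Complex.I * (b : ℂ))⁻¹)).comp_ofReal
    have hfun : (fun y : ℝ => (3 * Complex.I * (b : ℂ))⁻¹ *
        ((fun x : ℂ => x ^ (-3 : ℤ)) ∘
          (fun w : ℂ => (((a * s : ℝ) : ℂ)) + (-(Complex.I * (b : ℂ))) * w)) ((y : ℝ) : ℂ)) = F := by
      funext y
      simp only [hF, Function.comp, zpow_neg, zpow_ofNat]
      push_cast
      ring_nf
    rw [hfun] at h3
    convert h3 using 1
    have hIne : Complex.I ≠ 0 := Complex.I_ne_zero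
    have h3Ib : (3 : ℂ) * Complex.I * b ≠ 0 := by
      simp [hIne, hb']
    rw [show ((-3 : ℤ) - 1) = (-4 : ℤ) by norm_num, zpow_neg, zpow_ofNat, heq]
    push_cast
    have hgen : ∀ X : ℂ, (3 * Complex.I * (b : ℂ))⁻¹ * (-3 * X * -(Complex.I * ↑b)) = X := by
      intro X
      rw [show (-3 : ℂ) * X * -(Complex.I * ↑b) = (3 * Complex.I * ↑b) * X by ring,
        ← mul_assoc, inv_mul_cancel₀ h3Ib, one_mul]
    exact (hgen _).symm
  have hint : IntervalIntegrable
      (fun x : ℝ => (((a * s : ℝ) - Complex.I * ((b * x : ℝ) : ℂ)) ^ 4)⁻¹)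
      volume (-1 : ℝ) 1 := by
    apply Continuous.intervalIntegrable
    apply Continuous.inv₀
    · continuity
    · intro x
      exact pow_ne_zero _ (hvne x)
  have := intervalIntegral.integral_eq_sub_of_hasDerivAt hd hint
  rw [this]
  simp only [hF]
  push_cast
  ring_nf

/-- (Example 12.2 of the paper.)  For all reals `a, b > 0`,
`∫₁^∞ ∫_{−1}^1 (a·s − i·b·x)⁻⁴ dx ds = 2 / (3·(a² + b²)²)`. -/
theorem statement_15 (a b : ℝ) (ha : 0 < a) (hb : 0 < b) :
    (∫ s in Set.Ici (1 : ℝ),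
        ∫ x in (-1 : ℝ)..1,
          (((a * s : ℝ) - Complex.I * ((b * x : ℝ) : ℂ)) ^ 4)⁻¹) =
      ((2 / (3 * (a ^ 2 + b ^ 2) ^ 2) : ℝ) : ℂ) := by
  have hb' : (b : ℂ) ≠ 0 := Complex.ofReal_ne_zero.mpr hb.ne'
  have ha' : (a : ℂ) ≠ 0 := Complex.ofReal_ne_zero.mpr ha.ne'
  have hc1 : (-(Complex.I * (b : ℂ))).re = 0 := by simp
  have hc2 : (Complex.I * (b : ℂ)).re = 0 := by simp
  rw [MeasureTheory.integral_Ici_eq_integral_Ioi]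
  rw [MeasureTheory.setIntegral_congr_fun measurableSet_Ioi
    (fun s hs => aux_inner a b ha hb s (le_of_lt hs))]
  rw [MeasureTheory.integral_sub
    ((aux_intg a ha _ hc1).const_mul _)
    ((aux_intg a ha _ hc2).const_mul _)]
  rw [MeasureTheory.integral_const_mul, MeasureTheory.integral_const_mul]
  rw [aux_outer a ha _ hc1, aux_outer a ha _ hc2]
  have hz1 : ((a : ℂ) + -(Complex.I * (b : ℂ))) ≠ 0 := aux_ne a ha _ hc1
  have hz2 : ((a : ℂ) + Complex.I * (b : ℂ)) ≠ 0 := aux_ne a ha _ hc2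
  have hab : ((a : ℂ) ^ 2 + (b : ℂ) ^ 2) ≠ 0 := by
    have : (0 : ℝ) < a ^ 2 + b ^ 2 := by positivity
    exact_mod_cast Complex.ofReal_ne_zero.mpr this.ne'
  have hIne : Complex.I ≠ 0 := Complex.I_ne_zero
  set u : ℂ := (a : ℂ) + -(Complex.I * b) with hu
  set v : ℂ := (a : ℂ) + Complex.I * b with hv
  have hu2 : u ^ 2 ≠ 0 := pow_ne_zero _ hz1
  have hv2 : v ^ 2 ≠ 0 := pow_ne_zero _ hz2
  have hmul : u * v = (a : ℂ) ^ 2 + (b : ℂ) ^ 2 := by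
    rw [hu, hv]
    linear_combination (-(b : ℂ) ^ 2) * Complex.I_sq
  have hdiff : v ^ 2 - u ^ 2 = 4 * Complex.I * a * b := by rw [hu, hv]; ring
  have h1 : (u ^ 2)⁻¹ - (v ^ 2)⁻¹ = (v ^ 2 - u ^ 2) / (u ^ 2 * v ^ 2) := by
    field_simp
  have h2 : u ^ 2 * v ^ 2 = ((a : ℂ) ^ 2 + (b : ℂ) ^ 2) ^ 2 := by
    rw [← mul_pow, hmul]
  push_cast
  calc (3 * Complex.I * (b : ℂ))⁻¹ * ((2 * (a : ℂ))⁻¹ * (u ^ 2)⁻¹) -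
        (3 * Complex.I * (b : ℂ))⁻¹ * ((2 * (a : ℂ))⁻¹ * (v ^ 2)⁻¹)
      = (3 * Complex.I * (b : ℂ))⁻¹ * (2 * (a : ℂ))⁻¹ * ((u ^ 2)⁻¹ - (v ^ 2)⁻¹) := by ring
    _ = (3 * Complex.I * (b : ℂ))⁻¹ * (2 * (a : ℂ))⁻¹ *
          ((4 * Complex.I * a * b) / (((a : ℂ) ^ 2 + (b : ℂ) ^ 2) ^ 2)) := by
        rw [h1, hdiff, h2]
    _ = 2 / (3 * ((a : ℂ) ^ 2 + (b : ℂ) ^ 2) ^ 2) := by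
        have hD : (((a : ℂ) ^ 2 + (b : ℂ) ^ 2) ^ 2) ≠ 0 := pow_ne_zero _ hab
        have h3Ib : (3 : ℂ) * Complex.I * b ≠ 0 := by simp [hIne, hb']
        have h2a : (2 : ℂ) * a ≠ 0 := by simp [ha']
        have e1 : ∀ p q d c : ℂ, p⁻¹ * q⁻¹ * (c / d) = c / (p * q * d) := by
          intro p q d c
          rw [div_eq_mul_inv, div_eq_mul_inv, mul_inv, mul_inv]
          ring
        rw [e1]
        rw [div_eq_div_iff (mul_ne_zero (mul_ne_zero h3Ib h2a) hD)
          (mul_ne_zero three_ne_zero hD)]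
        ring
end

section
/- For every real c > 0 and every real a: ∫_0^1 (1 + r²) · (1 − r)^{−4} · ( ((1+r)/(1−r))·c + i·a )^{−7} dr = (25c² + 6iac − a²) / (240·c³·(c + ia)⁶). -/
set_option maxHeartbeats 1000000

open MeasureTheory

noncomputable def Zz (c a : ℝ) : ℂ := (c : ℂ) + Complex.I * a
noncomputable def Qq (c a : ℝ) : ℂ := (c : ℂ) - Complex.I * a

noncomputable def Pq (c a r : ℝ) : ℂ := Zz c a + (r : ℂ) * Qq c a

noncomputable def Ff (c a r : ℝ) : ℂ :=
  ((-15 : ℂ) * ((1 - (r : ℂ)) ^ 4 * Pq c a r ^ 2) +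
      (12 * (Zz c a - Qq c a)) * ((1 - (r : ℂ)) ^ 5 * Pq c a r) -
      (5 * (Zz c a ^ 2 + Qq c a ^ 2)) * (1 - (r : ℂ)) ^ 6) /
    ((30 * (Zz c a + Qq c a) ^ 3) * Pq c a r ^ 6)

noncomputable def Gg (c a r : ℝ) : ℂ :=
  (1 + (r : ℂ) ^ 2) * (1 - (r : ℂ)) ^ 3 / Pq c a r ^ 7

lemma Pq_ne (c a r : ℝ) (hc : 0 < c) (hr : 0 ≤ r) : Pq c a r ≠ 0 := by
  intro h
  have h2 := congrArg Complex.re h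
  simp [Pq, Zz, Qq] at h2
  nlinarith

lemma Zz_ne (c a : ℝ) (hc : 0 < c) : Zz c a ≠ 0 := by
  intro h
  have h2 := congrArg Complex.re h
  simp [Zz] at h2
  linarith

lemma ZQ_ne (c a : ℝ) (hc : 0 < c) : Zz c a + Qq c a ≠ 0 := by
  intro h
  have h2 := congrArg Complex.re h
  simp [Zz, Qq] at h2
  linarith

lemma hd_pow {f : ℝ → ℂ} {f' : ℂ} {x : ℝ} (n : ℕ) (hf : HasDerivAt f f' x) :
    HasDerivAt (fun s => f s ^ n) (((n : ℕ) : ℂ) * f x ^ (n - 1) * f') x := by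
  have h : HasDerivAt ((fun y : ℂ => y ^ n) ∘ f) (((n : ℕ) : ℂ) * f x ^ (n - 1) * f') x :=
    (hasDerivAt_pow n (f x)).comp x hf
  exact h

lemma hasDeriv (c a r : ℝ) (hc : 0 < c) (hr : 0 ≤ r) :
    HasDerivAt (Ff c a) (Gg c a r) r := by
  have hP0 : Pq c a r ≠ 0 := Pq_ne c a r hc hr
  have hS0 : Zz c a + Qq c a ≠ 0 := ZQ_ne c a hc
  have hu : HasDerivAt (fun s : ℝ => (s : ℂ)) 1 r := by
    exact Complex.ofRealCLM.hasDerivAt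
  have hw : HasDerivAt (fun s : ℝ => (1 : ℂ) - (s : ℂ)) (-1) r := by
    simpa using hu.const_sub 1
  have hP : HasDerivAt (Pq c a) (Qq c a) r := by
    unfold Pq
    simpa using ((hu.mul_const (Qq c a)).const_add (Zz c a))
  have hN1 : HasDerivAt (fun s : ℝ => (1 - (s : ℂ)) ^ 4 * Pq c a s ^ 2)
      ((((4:ℕ):ℂ) * (1 - (r : ℂ)) ^ (4-1) * (-1)) * Pq c a r ^ 2 +
        (1 - (r : ℂ)) ^ 4 * (((2:ℕ):ℂ) * Pq c a r ^ (2-1) * Qq c a)) r :=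
    (hd_pow 4 hw).mul (hd_pow 2 hP)
  have hN2 : HasDerivAt (fun s : ℝ => (1 - (s : ℂ)) ^ 5 * Pq c a s)
      ((((5:ℕ):ℂ) * (1 - (r : ℂ)) ^ (5-1) * (-1)) * Pq c a r +
        (1 - (r : ℂ)) ^ 5 * Qq c a) r :=
    (hd_pow 5 hw).mul hP
  have hN3 : HasDerivAt (fun s : ℝ => (1 - (s : ℂ)) ^ 6)
      (((6:ℕ):ℂ) * (1 - (r : ℂ)) ^ (6-1) * (-1)) r := hd_pow 6 hw
  have hNum := ((hN1.const_mul (-15 : ℂ)).add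
      (hN2.const_mul (12 * (Zz c a - Qq c a)))).sub
      (hN3.const_mul (5 * (Zz c a ^ 2 + Qq c a ^ 2)))
  have hDen : HasDerivAt (fun s : ℝ => (30 * (Zz c a + Qq c a) ^ 3) * Pq c a s ^ 6)
      ((30 * (Zz c a + Qq c a) ^ 3) * (((6:ℕ):ℂ) * Pq c a r ^ (6-1) * Qq c a)) r :=
    (hd_pow 6 hP).const_mul _
  have hDen0 : (30 * (Zz c a + Qq c a) ^ 3) * Pq c a r ^ 6 ≠ 0 := by
    apply mul_ne_zero (by exact mul_ne_zero (by norm_num) (pow_ne_zero _ hS0))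
    exact pow_ne_zero _ hP0
  have h := hNum.div hDen hDen0
  refine h.congr_deriv ?_
  simp only [Pi.add_apply, Pi.sub_apply]
  unfold Gg Pq
  push_cast
  have hP0' : Zz c a + (r : ℂ) * Qq c a ≠ 0 := by rw [← Pq]; exact hP0
  field_simp
  ring

lemma Gg_integrable (c a : ℝ) (hc : 0 < c) :
    IntervalIntegrable (Gg c a) MeasureTheory.volume 0 1 := by
  apply ContinuousOn.intervalIntegrable
  apply ContinuousOn.div
  · fun_prop
  · have : Continuous (fun r : ℝ => Pq c a r ^ 7) := by unfold Pq Zz Qq; fun_prop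
    exact this.continuousOn
  · intro x hx
    rw [Set.uIcc_of_le (by norm_num : (0:ℝ) ≤ 1)] at hx
    exact pow_ne_zero _ (Pq_ne c a x hc hx.1)

/-- (First closed-form `r`-integral of Example 12.4 of the paper.)
For every real `c > 0` and real `a`,
`∫₀¹ (1 + r²)(1 − r)⁻⁴ (((1+r)/(1−r))·c + i·a)⁻⁷ dr = (25c² + 6iac − a²)/(240·c³·(c + ia)⁶)`. -/
theorem statement_16 (c a : ℝ) (hc : 0 < c) :
    (∫ r in (0 : ℝ)..1,
        (((1 + r ^ 2) / (1 - r) ^ 4 : ℝ) : ℂ) *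
          (((((1 + r) / (1 - r) * c : ℝ) : ℂ) + Complex.I * (a : ℂ)) ^ 7)⁻¹) =
      (25 * (c : ℂ) ^ 2 + 6 * Complex.I * (a : ℂ) * (c : ℂ) - (a : ℂ) ^ 2) /
        (240 * (c : ℂ) ^ 3 * ((c : ℂ) + Complex.I * (a : ℂ)) ^ 6) := by
  have hcC : (c : ℂ) ≠ 0 := by exact_mod_cast hc.ne'
  have heq : ∀ r ∈ Set.uIcc (0:ℝ) 1,
      (((1 + r ^ 2) / (1 - r) ^ 4 : ℝ) : ℂ) *
          (((((1 + r) / (1 - r) * c : ℝ) : ℂ) + Complex.I * (a : ℂ)) ^ 7)⁻¹ = Gg c a r := by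
    intro r hr
    rw [Set.uIcc_of_le (by norm_num : (0:ℝ) ≤ 1)] at hr
    have hP0 : Pq c a r ≠ 0 := Pq_ne c a r hc hr.1
    rcases eq_or_lt_of_le hr.2 with h1 | h1
    · subst h1
      norm_num [Gg]
    · have h1r : (1 : ℝ) - r ≠ 0 := by linarith
      have h1rC : (1 : ℂ) - (r : ℂ) ≠ 0 := by
        intro h
        apply h1r
        exact_mod_cast h
      have hrw : ((((1 + r) / (1 - r) * c : ℝ) : ℂ) + Complex.I * (a : ℂ)) =
          Pq c a r / (1 - (r : ℂ)) := by
        unfold Pq Zz Qq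
        push_cast
        field_simp
        ring
      rw [hrw, div_pow, inv_div]
      unfold Gg
      rw [eq_div_iff (pow_ne_zero 7 hP0)]
      push_cast
      field_simp
  have key : ∀ x ∈ Set.uIcc (0:ℝ) 1, HasDerivAt (Ff c a) (Gg c a x) x := by
    intro x hx
    rw [Set.uIcc_of_le (by norm_num : (0:ℝ) ≤ 1)] at hx
    exact hasDeriv c a x hc hx.1
  rw [intervalIntegral.integral_congr heq,
    intervalIntegral.integral_eq_sub_of_hasDerivAt key (Gg_integrable c a hc)]
  have hF1 : Ff c a 1 = 0 := by
    unfold Ff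
    norm_num
  have hP00 : Pq c a 0 = Zz c a := by simp [Pq]
  have hnum : 25 * (c : ℂ) ^ 2 + 6 * Complex.I * (a : ℂ) * (c : ℂ) - (a : ℂ) ^ 2 =
      8 * Zz c a ^ 2 + 12 * Zz c a * Qq c a + 5 * Qq c a ^ 2 := by
    unfold Zz Qq
    linear_combination (-(a:ℂ)^2) * Complex.I_sq
  have hden : (240 : ℂ) * (c : ℂ) ^ 3 = 30 * (Zz c a + Qq c a) ^ 3 := by
    unfold Zz Qq
    ring
  have hzz : ((c : ℂ) + Complex.I * (a : ℂ)) = Zz c a := rfl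
  rw [hF1, hnum, hden, hzz]
  unfold Ff
  rw [hP00]
  have hS0 : Zz c a + Qq c a ≠ 0 := ZQ_ne c a hc
  have hZ0 : Zz c a ≠ 0 := Zz_ne c a hc
  field_simp
  push_cast
  ring
end

section
/- For every real c > 0 and every real a: ∫_0^1 (1 − r²) · (1 − r)^{−4} · ( ((1+r)/(1−r))·c + i·a )^{−7} dr = (6c + ia) / (60·c²·(c + ia)⁶). -/
set_option maxHeartbeats 1200000

open MeasureTheory

/-- (Second closed-form `r`-integral of Example 12.4 of the paper.)
For every real `c > 0` and real `a`,
`∫₀¹ (1 − r²)(1 − r)⁻⁴ (((1+r)/(1−r))·c + i·a)⁻⁷ dr = (6c + ia)/(60·c²·(c + ia)⁶)`. -/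
theorem statement_17 (c a : ℝ) (hc : 0 < c) :
    (∫ r in (0 : ℝ)..1,
        (((1 - r ^ 2) / (1 - r) ^ 4 : ℝ) : ℂ) *
          (((((1 + r) / (1 - r) * c : ℝ) : ℂ) + Complex.I * (a : ℂ)) ^ 7)⁻¹) =
      (6 * (c : ℂ) + Complex.I * (a : ℂ)) /
        (60 * (c : ℂ) ^ 2 * ((c : ℂ) + Complex.I * (a : ℂ)) ^ 6) := by
  set u : ℂ := Complex.I * (a : ℂ) with hu
  have hure : u.re = 0 := by simp [hu]
  set β : ℂ := (c : ℂ) - u with hβ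
  set γ : ℂ := (c : ℂ) + u with hγ
  have hβ0 : β ≠ 0 := by
    intro h
    have := congrArg Complex.re h
    simp [hβ, Complex.sub_re, hure] at this
    exact absurd this (ne_of_gt hc)
  have hγ0 : γ ≠ 0 := by
    intro h
    have := congrArg Complex.re h
    simp [hγ, Complex.add_re, hure] at this
    exact absurd this (ne_of_gt hc)
  have hc0 : (c : ℂ) ≠ 0 := Complex.ofReal_ne_zero.mpr (ne_of_gt hc)
  have hDne : ∀ x : ℝ, 0 ≤ x → γ + β * x ≠ 0 := by
    intro x hx h
    have := congrArg Complex.re h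
    simp [hβ, hγ, Complex.add_re, Complex.sub_re, Complex.mul_re, hure,
      Complex.ofReal_re, Complex.ofReal_im] at this
    nlinarith
  -- the nice integrand
  set f : ℝ → ℂ := fun r => ((1 : ℂ) + r) * ((1 : ℂ) - r) ^ 4 / (γ + β * r) ^ 7 with hf
  have hcongr :
      (∫ r in (0 : ℝ)..1,
          (((1 - r ^ 2) / (1 - r) ^ 4 : ℝ) : ℂ) *
            (((((1 + r) / (1 - r) * c : ℝ) : ℂ) + u) ^ 7)⁻¹) =
        ∫ r in (0 : ℝ)..1, f r := by
    apply intervalIntegral.integral_congr_ae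
    have h1 : ∀ᵐ x : ℝ, x ≠ 1 := by
      have : ({1} : Set ℝ).Countable := Set.countable_singleton 1
      simpa [ae_iff] using this.measure_zero _
    filter_upwards [h1] with x hx1 hx
    rw [Set.uIoc_of_le (by norm_num : (0:ℝ) ≤ 1)] at hx
    have hx0 : 0 < x := hx.1
    have hxlt : x < 1 := lt_of_le_of_ne hx.2 hx1
    have h1x : (1 : ℝ) - x ≠ 0 := by linarith
    have h1xc : (1 : ℂ) - (x : ℂ) ≠ 0 := by
      simpa using (Complex.ofReal_ne_zero.mpr h1x)
    have hD : γ + β * x ≠ 0 := hDne x hx0.le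
    have hkey : (((1 + x) / (1 - x) * c : ℝ) : ℂ) + u =
        (γ + β * x) / ((1 : ℂ) - x) := by
      push_cast
      field_simp [hβ, hγ]
      ring
    rw [hf, hkey]
    push_cast
    field_simp
    ring
  rw [hcongr]
  -- antiderivative F = β⁻⁶ * Q(D r) / (D r)^6
  set Q : ℂ → ℂ := fun d =>
    16 * u * c ^ 4 / 3 - (16 * c ^ 4 + 64 * u * c ^ 3) / 5 * d
      + (8 * c ^ 3 + 12 * u * c ^ 2) * d ^ 2 - (24 * c ^ 2 + 16 * u * c) / 3 * d ^ 3
      + (4 * c + u) * d ^ 4 - d ^ 5 with hQ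
  set F : ℝ → ℂ := fun r => β⁻¹ ^ 6 * (Q (γ + β * r) / (γ + β * r) ^ 6) with hF
  have hderiv : ∀ x ∈ Set.uIcc (0 : ℝ) 1, HasDerivAt F (f x) x := by
    intro x hx
    rw [Set.uIcc_of_le (by norm_num : (0:ℝ) ≤ 1)] at hx
    have hD : γ + β * (x : ℂ) ≠ 0 := hDne x hx.1
    have hD6 : (γ + β * (x : ℂ)) ^ 6 ≠ 0 := pow_ne_zero _ hD
    have hDlin : HasDerivAt (fun z : ℂ => γ + β * z) β (x : ℂ) := by
      simpa using ((hasDerivAt_id (x : ℂ)).const_mul β).const_add γ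
    have hnum : HasDerivAt (fun z : ℂ => Q (γ + β * z))
        ((- (16 * c ^ 4 + 64 * u * c ^ 3) / 5
          + (8 * c ^ 3 + 12 * u * c ^ 2) * (2 * (γ + β * (x:ℂ)))
          - (24 * c ^ 2 + 16 * u * c) / 3 * (3 * (γ + β * (x:ℂ)) ^ 2)
          + (4 * c + u) * (4 * (γ + β * (x:ℂ)) ^ 3)
          - 5 * (γ + β * (x:ℂ)) ^ 4) * β) (x : ℂ) := by
      simp only [hQ]
      have h1 := hDlin.const_mul ((16 * (c:ℂ) ^ 4 + 64 * u * c ^ 3) / 5)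
      have h2 := (hDlin.pow 2).const_mul ((8 * (c:ℂ) ^ 3 + 12 * u * c ^ 2))
      have h3 := (hDlin.pow 3).const_mul ((24 * (c:ℂ) ^ 2 + 16 * u * c) / 3)
      have h4 := (hDlin.pow 4).const_mul ((4 * (c:ℂ) + u))
      have h5 := hDlin.pow 5
      have := (((((hasDerivAt_const (x:ℂ) (16 * u * (c:ℂ) ^ 4 / 3)).sub h1).add
        h2).sub h3).add h4).sub h5
      convert this using 1
      · rfl
      · rfl
      · rfl
      all_goals push_cast; ring
    have hden : HasDerivAt (fun z : ℂ => (γ + β * z) ^ 6)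
        (6 * (γ + β * (x:ℂ)) ^ 5 * β) (x : ℂ) := by
      have := hDlin.pow 6
      convert this using 1
      · rfl
      · rfl
      · rfl
      all_goals push_cast; ring
    have hdiv := (hnum.div hden hD6).const_mul (β⁻¹ ^ 6)
    have hcomp := hdiv.comp_ofReal
    convert hcomp using 1
    · rfl
    rw [hf]
    set d : ℂ := γ + β * (x : ℂ) with hd
    have hd0 : d ≠ 0 := hD
    have hd7 : d ^ 7 ≠ 0 := pow_ne_zero _ hd0
    have key : (- (16 * (c:ℂ) ^ 4 + 64 * u * c ^ 3) / 5
          + (8 * c ^ 3 + 12 * u * c ^ 2) * (2 * d)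
          - (24 * c ^ 2 + 16 * u * c) / 3 * (3 * d ^ 2)
          + (4 * c + u) * (4 * d ^ 3)
          - 5 * d ^ 4) * β * d ^ 6 - Q d * (6 * d ^ 5 * β) =
        ((1 : ℂ) + x) * ((1 : ℂ) - x) ^ 4 * β ^ 6 * d ^ 5 := by
      simp only [hQ, hd, hβ, hγ]
      ring
    rw [key]
    have h12 : (d ^ 6) ^ 2 = d ^ 5 * d ^ 7 := by ring
    rw [h12]
    field_simp
    rw [mul_comm (x:ℂ) β, ← hd, mul_div_assoc, div_self hd7]
    ring
  have hint : IntervalIntegrable f volume 0 1 := by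
    apply ContinuousOn.intervalIntegrable
    apply ContinuousOn.div
    · fun_prop
    · fun_prop
    · intro x hx
      rw [Set.uIcc_of_le (by norm_num : (0:ℝ) ≤ 1)] at hx
      exact pow_ne_zero _ (hDne x hx.1)
  rw [intervalIntegral.integral_eq_sub_of_hasDerivAt hderiv hint]
  rw [hF]
  simp only [Complex.ofReal_one, Complex.ofReal_zero, mul_one, mul_zero, add_zero]
  have e1 : γ + β = 2 * (c : ℂ) := by rw [hβ, hγ]; ring
  have h2c6 : ((2:ℂ) * c) ^ 6 ≠ 0 := pow_ne_zero _ (by simpa using hc0)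
  have h60 : (60:ℂ) * c ^ 2 ≠ 0 := by
    refine mul_ne_zero (by norm_num) (pow_ne_zero _ hc0)
  have hγ6 : γ ^ 6 ≠ 0 := pow_ne_zero _ hγ0
  have hβ6 : β ^ 6 ≠ 0 := pow_ne_zero _ hβ0
  have hQ1 : Q (2 * (c:ℂ)) / (2 * (c:ℂ)) ^ 6 = (-6 * c + u) / (60 * c ^ 2) := by
    rw [hQ, div_eq_div_iff h2c6 h60]
    ring
  rw [e1, hQ1]
  rw [inv_pow, ← mul_sub, inv_mul_eq_iff_eq_mul₀ hβ6]
  rw [div_sub_div _ _ h60 hγ6, ← mul_div_assoc,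
    div_eq_div_iff (mul_ne_zero h60 hγ6) (mul_ne_zero h60 hγ6)]
  rw [hQ, hβ, hγ]
  ring
end
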